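/- arXiv:2203.12765 — 5 statements merged into one kernel-verified Lean document; each statement's English description precedes it below -/
import Mathlib

section
/- Let (X,‖·‖,τ) satisfy the standard assumptions and the dual assumptions, with (X,γ) a Mazur space for γ=γ(‖·‖,τ), and let (T(t))_{t≥0} be a τ-bi-continuous semigroup on X. Define ‖x‖^• := sup{|⟨x^•, x⟩| : x^• ∈ X^•, ‖x^•‖_{X'} ≤ 1}. Then ‖·‖^• is a norm on X equivalent to ‖·‖; more precisely ‖x‖^• ≤ ‖x‖ ≤ M‖x‖^• where M = limsup_{t→0+}‖T(t)‖_{L(X)}. -/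
noncomputable section

open Filter Topology MeasureTheory

/-- The norm dual `X' = X →L[ℂ] ℂ` of `X` (with the operator norm); the topology on `X`
here is the norm topology, irrespective of any other topology in scope. -/
abbrev wDual (X : Type*) [NormedAddCommGroup X] [NormedSpace ℂ X] : Type _ := X →L[ℂ] ℂ

/-- The space `L(X)` of bounded operators on `X` (with respect to the norm). -/
abbrev bOp (X : Type*) [NormedAddCommGroup X] [NormedSpace ℂ X] : Type _ := X →L[ℂ] X


/-- Composition `f ∘ R` of a functional with an operator (the dual action). -/
abbrev dualComp {X : Type*} [NormedAddCommGroup X] [NormedSpace ℂ X]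
    (f : wDual X) (R : bOp X) : wDual X := ContinuousLinearMap.comp f R

/-- Composition of bounded operators. -/
abbrev opComp {X : Type*} [NormedAddCommGroup X] [NormedSpace ℂ X]
    (R S : bOp X) : bOp X := ContinuousLinearMap.comp R S

/-- A sequence is Cauchy with respect to a given (group) topology `t`. -/
def SeqCauchyIn {X : Type*} [AddCommGroup X] (t : TopologicalSpace X) (u : ℕ → X) : Prop :=
  ∀ U ∈ @nhds X t 0, ∃ N : ℕ, ∀ m ≥ N, ∀ n ≥ N, u m - u n ∈ U

/-- The standard assumptions on a triple `(X, ‖·‖, τ)`: `τ` is a coarser Hausdorff locally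
convex vector topology, sequentially complete on norm-bounded sets, and the `τ`-dual is
norming for `X`. -/
structure StdAssumptions (X : Type*) [NormedAddCommGroup X] [NormedSpace ℂ X]
    (τ : TopologicalSpace X) : Prop where
  coarser : (UniformSpace.toTopologicalSpace : TopologicalSpace X) ≤ τ
  t2 : @T2Space X τ
  addGroup : @IsTopologicalAddGroup X τ _
  contSMul : @ContinuousSMul ℂ X _ _ τ
  locallyConvex : @LocallyConvexSpace ℝ X _ _ _ _ τ
  seqComplete : ∀ u : ℕ → X, (∃ C, ∀ n, ‖u n‖ ≤ C) → SeqCauchyIn τ u →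
    ∃ l : X, Filter.Tendsto u Filter.atTop (@nhds X τ l)
  norming : ∀ x : X,
    IsLUB {r : ℝ | ∃ f : wDual X, @Continuous X ℂ τ _ ⇑f ∧ ‖f‖ ≤ 1 ∧ r = ‖f x‖} ‖x‖

/-- `γ` is the mixed topology `γ(‖·‖, τ)`: the finest linear topology agreeing with `τ` on
norm-bounded sets and lying between `τ` and the norm topology. -/
structure IsMixedTopology (X : Type*) [NormedAddCommGroup X] [NormedSpace ℂ X]
    (τ γ : TopologicalSpace X) : Prop where
  le_tau : γ ≤ τ
  norm_le : (UniformSpace.toTopologicalSpace : TopologicalSpace X) ≤ γ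
  addGroup : @IsTopologicalAddGroup X γ _
  contSMul : @ContinuousSMul ℂ X _ _ γ
  agrees : ∀ B : Set X, Bornology.IsBounded B →
    TopologicalSpace.induced ((↑) : B → X) γ = TopologicalSpace.induced ((↑) : B → X) τ
  finest : ∀ γ' : TopologicalSpace X, @IsTopologicalAddGroup X γ' _ →
    @ContinuousSMul ℂ X _ _ γ' →
    (UniformSpace.toTopologicalSpace : TopologicalSpace X) ≤ γ' → γ' ≤ τ →
    (∀ B : Set X, Bornology.IsBounded B →
      TopologicalSpace.induced ((↑) : B → X) γ' = TopologicalSpace.induced ((↑) : B → X) τ) →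
    γ ≤ γ'

/-- A topology `t` on `X` makes `X` a Mazur space if every `t`-sequentially continuous linear
functional is `t`-continuous. -/
def MazurIn (X : Type*) [NormedAddCommGroup X] [NormedSpace ℂ X]
    (t : TopologicalSpace X) : Prop :=
  ∀ f : X →ₗ[ℂ] ℂ,
    (∀ (u : ℕ → X) (x : X), Filter.Tendsto u Filter.atTop (@nhds X t x) →
      Filter.Tendsto (fun n => f (u n)) Filter.atTop (nhds (f x))) →
    @Continuous X ℂ t _ ⇑f

/-- A `τ`-bi-continuous semigroup on `X`. -/
structure BiContinuousSemigroup (X : Type*) [NormedAddCommGroup X] [NormedSpace ℂ X]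
    (τ : TopologicalSpace X) where
  T : ℝ → bOp X
  map_zero : T 0 = 1
  map_add : ∀ s ≥ (0:ℝ), ∀ t ≥ (0:ℝ), T (s + t) = opComp (T s) (T t)
  strongCont : ∀ x : X, @ContinuousOn ℝ X _ τ (fun t => T t x) (Set.Ici 0)
  expBounded : ∃ M ≥ (1:ℝ), ∃ ω : ℝ, ∀ t ≥ (0:ℝ), ‖T t‖ ≤ M * Real.exp (ω * t)
  biEquicont : ∀ (u : ℕ → X) (x : X), (∃ C, ∀ n, ‖u n‖ ≤ C) →
    Filter.Tendsto u Filter.atTop (@nhds X τ x) →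
    ∀ b ≥ (0:ℝ), ∀ U ∈ @nhds X τ (0:X), ∀ᶠ n in Filter.atTop,
      ∀ t ∈ Set.Icc (0:ℝ) b, T t (u n - x) ∈ U

/-- `X^∘`: the space of norm-continuous functionals that are `τ`-sequentially continuous on
norm-bounded sets. -/
def circDual (X : Type*) [NormedAddCommGroup X] [NormedSpace ℂ X]
    (τ : TopologicalSpace X) : Set (wDual X) :=
  {f | ∀ (u : ℕ → X) (x : X), (∃ C, ∀ n, ‖u n‖ ≤ C) →
    Filter.Tendsto u Filter.atTop (@nhds X τ x) →
    Filter.Tendsto (fun n => f (u n)) Filter.atTop (nhds (f x))}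

/-- The dual assumptions: `X^∘ ∩ B_{X'}` is sequentially `σ(X^∘,X)`-complete, and every
norm-bounded `σ(X^∘,X)`-null sequence in `X^∘` is `τ`-equicontinuous on norm-bounded sets. -/
structure DualAssumptions (X : Type*) [NormedAddCommGroup X] [NormedSpace ℂ X]
    (τ : TopologicalSpace X) : Prop where
  ballSeqComplete : ∀ u : ℕ → wDual X, (∀ n, u n ∈ circDual X τ) →
    (∀ n, ‖u n‖ ≤ 1) → (∀ x : X, CauchySeq fun n => u n x) →
    ∃ f ∈ circDual X τ, ‖f‖ ≤ 1 ∧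
      ∀ x : X, Filter.Tendsto (fun n => u n x) Filter.atTop (nhds (f x))
  equicont : ∀ u : ℕ → wDual X, (∀ n, u n ∈ circDual X τ) →
    (∃ C, ∀ n, ‖u n‖ ≤ C) →
    (∀ x : X, Filter.Tendsto (fun n => u n x) Filter.atTop (nhds 0)) →
    ∀ B : Set X, Bornology.IsBounded B → ∀ x₀ ∈ B, ∀ ε > 0,
      ∃ U ∈ @nhds X τ x₀, ∀ n, ∀ x ∈ B ∩ U, ‖u n x - u n x₀‖ < ε

/-- The bi-sun dual `X^•`: the part of `X^∘` on which the dual semigroup is norm-strongly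
continuous. -/
def sunDual {X : Type*} [NormedAddCommGroup X] [NormedSpace ℂ X] {τ : TopologicalSpace X}
    (S : BiContinuousSemigroup X τ) : Set (wDual X) :=
  {f | f ∈ circDual X τ ∧
    Filter.Tendsto (fun t : ℝ => dualComp f (S.T t))
      (nhdsWithin 0 (Set.Ioi 0)) (nhds f)}

/-- The subspace of norm-strong continuity of the semigroup. -/
def contSubspace {X : Type*} [NormedAddCommGroup X] [NormedSpace ℂ X] {τ : TopologicalSpace X}
    (S : BiContinuousSemigroup X τ) : Set X :=
  {x | Filter.Tendsto (fun t : ℝ => S.T t x) (nhdsWithin 0 (Set.Ioi 0)) (nhds x)}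

/-- The norm `‖x‖^• = sup { |⟨x^•, x⟩| : x^• ∈ X^•, ‖x^•‖ ≤ 1 }`. -/
def bulletNorm {X : Type*} [NormedAddCommGroup X] [NormedSpace ℂ X] {τ : TopologicalSpace X}
    (S : BiContinuousSemigroup X τ) (x : X) : ℝ :=
  sSup {r : ℝ | ∃ f ∈ sunDual S, ‖f‖ ≤ 1 ∧ r = ‖f x‖}

/-- The weak topology `σ(X, F)` on `X` induced by a set `F` of functionals. -/
def weakTop {X : Type*} [NormedAddCommGroup X] [NormedSpace ℂ X]
    (F : Set (wDual X)) : TopologicalSpace X :=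
  ⨅ f ∈ F, TopologicalSpace.induced (⇑f) inferInstance

/-- `(D, A)` is the generator of the `τ`-bi-continuous semigroup `S`. -/
def IsBiGenerator {X : Type*} [NormedAddCommGroup X] [NormedSpace ℂ X] {τ : TopologicalSpace X}
    (S : BiContinuousSemigroup X τ) (D : Set X) (A : X → X) : Prop :=
  (∀ x : X, x ∈ D ↔
    ((∃ y : X, Filter.Tendsto (fun t : ℝ => t⁻¹ • (S.T t x - x))
        (nhdsWithin 0 (Set.Ioi 0)) (@nhds X τ y)) ∧
      ∃ C : ℝ, ∀ t ∈ Set.Ioc (0:ℝ) 1, ‖S.T t x - x‖ ≤ C * t)) ∧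
  ∀ x ∈ D, Filter.Tendsto (fun t : ℝ => t⁻¹ • (S.T t x - x))
    (nhdsWithin 0 (Set.Ioi 0)) (@nhds X τ (A x))

/-- `l` lies in the resolvent set of `(D, A)` with resolvent operator `R = R(l, A)`. -/
def IsResolvent {X : Type*} [NormedAddCommGroup X] [NormedSpace ℂ X]
    (D : Set X) (A : X → X) (l : ℂ) (R : bOp X) : Prop :=
  (∀ x : X, R x ∈ D ∧ l • R x - A (R x) = x) ∧ ∀ x ∈ D, R (l • x - A x) = x

/-- `(Db, Ab)` is the generator of the strongly continuous semigroup `T^•` on `X^•`. -/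
def IsSunGenerator {X : Type*} [NormedAddCommGroup X] [NormedSpace ℂ X] {τ : TopologicalSpace X}
    (S : BiContinuousSemigroup X τ) (Db : Set (wDual X))
    (Ab : wDual X → wDual X) : Prop :=
  (∀ f : wDual X, f ∈ Db ↔ (f ∈ sunDual S ∧ ∃ g ∈ sunDual S,
    Filter.Tendsto (fun t : ℝ => t⁻¹ • (dualComp f (S.T t) - f))
      (nhdsWithin 0 (Set.Ioi 0)) (nhds g))) ∧
  ∀ f ∈ Db, Ab f ∈ sunDual S ∧
    Filter.Tendsto (fun t : ℝ => t⁻¹ • (dualComp f (S.T t) - f))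
      (nhdsWithin 0 (Set.Ioi 0)) (nhds (Ab f))

/-- The set `G_t` of Cesàro means `(1/t) ∫_0^t T(s) g ds`, `g ∈ G` (a Pettis integral,
characterized by pairing with all functionals in `X^∘`); `G_0 := G`. -/
def cesaroSet {X : Type*} [NormedAddCommGroup X] [NormedSpace ℂ X] {τ : TopologicalSpace X}
    (S : BiContinuousSemigroup X τ) (G : Set X) (t : ℝ) : Set X :=
  if t = 0 then G else
    {y | ∃ g ∈ G, ∀ f ∈ circDual X τ, f y = (t : ℂ)⁻¹ * ∫ s in (0:ℝ)..t, f (S.T s g)}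

/-- The Favard space of the semigroup: `{x : limsup_{t→0⁺} (1/t)‖T(t)x − x‖ < ∞}`. -/
def Favard {X : Type*} [NormedAddCommGroup X] [NormedSpace ℂ X] {τ : TopologicalSpace X}
    (S : BiContinuousSemigroup X τ) : Set X :=
  {x | ∃ C : ℝ, ∀ᶠ t in nhdsWithin (0:ℝ) (Set.Ioi 0), ‖S.T t x - x‖ ≤ C * t}

/-- `φ` is a bounded linear functional on the set `F` of functionals (viewed as an element
of the dual of the subspace `F`). -/
def BoundedLinearOn {X : Type*} [NormedAddCommGroup X] [NormedSpace ℂ X]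
    (F : Set (wDual X)) (φ : wDual X → ℂ) : Prop :=
  (∀ f ∈ F, ∀ g ∈ F, φ (f + g) = φ f + φ g) ∧
  (∀ (c : ℂ), ∀ f ∈ F, φ (c • f) = c * φ f) ∧
  ∃ C : ℝ, ∀ f ∈ F, ‖φ f‖ ≤ C * ‖f‖

/-- The growth bound `ω₀` of an (exponentially bounded) semigroup, as an extended real. -/
def growthBound {X : Type*} [NormedAddCommGroup X] [NormedSpace ℂ X]
    (T : ℝ → bOp X) : EReal :=
  sInf ((fun ω : ℝ => (ω : EReal)) ''
    {ω : ℝ | ∃ M ≥ (1:ℝ), ∀ t ≥ (0:ℝ), ‖T t‖ ≤ M * Real.exp (ω * t)})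



section CleanSmul

variable {X : Type*} [NormedAddCommGroup X] [NormedSpace ℂ X]

lemma norm_inv_smul_le {φ : wDual X} {c : ℝ} (hc : 0 < c) (hn : ‖φ‖ ≤ c) :
    ‖(c⁻¹ : ℝ) • φ‖ ≤ 1 := by
  have hns : ‖(c⁻¹ : ℝ) • φ‖ = ‖(c⁻¹ : ℝ)‖ * ‖φ‖ := norm_smul (c⁻¹ : ℝ) φ
  rw [hns, Real.norm_eq_abs, abs_of_pos (inv_pos.2 hc)]
  calc c⁻¹ * ‖φ‖ ≤ c⁻¹ * c := mul_le_mul_of_nonneg_left hn (by positivity)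
    _ = 1 := inv_mul_cancel₀ (ne_of_gt hc)

lemma norm_inv_smul_apply (φ : wDual X) {c : ℝ} (hc : 0 < c) (x : X) :
    ‖φ x‖ = c * ‖((c⁻¹ : ℝ) • φ) x‖ := by
  have h1 : ((c⁻¹ : ℝ) • φ) x = (c⁻¹ : ℝ) • (φ x) := rfl
  have h2 : ‖(c⁻¹ : ℝ) • (φ x)‖ = ‖(c⁻¹ : ℝ)‖ * ‖φ x‖ := norm_smul (c⁻¹ : ℝ) (φ x)
  rw [h1, h2, Real.norm_eq_abs, abs_of_pos (inv_pos.2 hc)]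
  field_simp

end CleanSmul

section AuxSun

variable {X : Type*} [NormedAddCommGroup X] [NormedSpace ℂ X] {τ : TopologicalSpace X}

lemma zero_mem_sunDual (S : BiContinuousSemigroup X τ) : (0 : wDual X) ∈ sunDual S := by
  constructor
  · intro u x _ _
    simp only [ContinuousLinearMap.zero_apply]
    exact tendsto_const_nhds
  · simp only [dualComp, ContinuousLinearMap.zero_comp]
    exact tendsto_const_nhds

lemma smul_mem_sunDual (S : BiContinuousSemigroup X τ) (a : ℝ) {f : wDual X}
    (hf : f ∈ sunDual S) : a • f ∈ sunDual S := by
  constructor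
  · intro u x hb hc
    have h := (hf.1 u x hb hc).const_smul a
    simpa only [ContinuousLinearMap.smul_apply, smul_eq_mul] using h
  · have h2 := hf.2.const_smul a
    simpa only [dualComp, ContinuousLinearMap.smul_comp] using h2

lemma exists_scaled (S : BiContinuousSemigroup X τ) {φ : wDual X} (hφ : φ ∈ sunDual S)
    {c : ℝ} (hc : 0 < c) (hn : ‖φ‖ ≤ c) (x : X) :
    ∃ ψ : wDual X, ψ ∈ sunDual S ∧ ‖ψ‖ ≤ 1 ∧ ‖φ x‖ = c * ‖ψ x‖ :=
  ⟨(c⁻¹ : ℝ) • φ, smul_mem_sunDual S _ hφ, norm_inv_smul_le hc hn,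
    norm_inv_smul_apply φ hc x⟩

lemma contOn_pair (S : BiContinuousSemigroup X τ) (f : wDual X)
    (hfτ : @Continuous X ℂ τ _ ⇑f) (x : X) :
    ContinuousOn (fun s : ℝ => f (S.T s x)) (Set.Ici 0) :=
  hfτ.comp_continuousOn (S.strongCont x)

lemma avg_mem (S : BiContinuousSemigroup X τ) (f : wDual X)
    (hfτ : @Continuous X ℂ τ _ ⇑f) (hf1 : ‖f‖ ≤ 1)
    {t : ℝ} (ht : 0 < t) {c : ℝ} (hc : 0 < c)
    (hbound : ∀ s ∈ Set.Ioc (0:ℝ) t, ‖S.T s‖ ≤ c) :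
    ∃ φ : wDual X, φ ∈ sunDual S ∧ ‖φ‖ ≤ c ∧
      ∀ x : X, φ x = (t : ℂ)⁻¹ * ∫ s in (0:ℝ)..t, f (S.T s x) := by
  have hnt : ‖(t:ℂ)⁻¹‖ = t⁻¹ := by
    rw [norm_inv]
    simp [Real.norm_eq_abs, abs_of_pos ht]
  have hgc : ∀ x : X, ContinuousOn (fun s : ℝ => f (S.T s x)) (Set.Ici 0) := by
    intro x
    exact hfτ.comp_continuousOn (S.strongCont x)
  have hgint : ∀ (x : X) (a b : ℝ), 0 ≤ a → 0 ≤ b →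
      IntervalIntegrable (fun s : ℝ => f (S.T s x)) MeasureTheory.volume a b := by
    intro x a b ha hb
    apply ContinuousOn.intervalIntegrable
    apply (hgc x).mono
    intro s hs
    rw [Set.mem_uIcc] at hs
    rcases hs with ⟨h1, _⟩ | ⟨h1, _⟩
    · exact le_trans ha h1
    · exact le_trans hb h1
  let φL : X →ₗ[ℂ] ℂ :=
    { toFun := fun x => (t : ℂ)⁻¹ * ∫ s in (0:ℝ)..t, f (S.T s x)
      map_add' := by
        intro x y
        have he : (fun s : ℝ => f (S.T s (x + y)))
            = fun s : ℝ => f (S.T s x) + f (S.T s y) := by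
          funext s; simp [map_add]
        simp only [he]
        rw [intervalIntegral.integral_add (hgint x 0 t le_rfl ht.le)
          (hgint y 0 t le_rfl ht.le), mul_add]
      map_smul' := by
        intro a x
        have he : (fun s : ℝ => f (S.T s (a • x))) = fun s : ℝ => a • f (S.T s x) := by
          funext s
          have e1 : S.T s (a • x) = a • S.T s x := _root_.map_smul (S.T s) a x
          have e2 : f (a • S.T s x) = a • f (S.T s x) := _root_.map_smul f a (S.T s x)
          rw [e1, e2]
        simp only [he]
        rw [intervalIntegral.integral_smul]
        simp only [smul_eq_mul, RingHom.id_apply]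
        ring }
  have hbL : ∀ x : X, ‖φL x‖ ≤ c * ‖x‖ := by
    intro x
    have hI : ‖∫ s in (0:ℝ)..t, f (S.T s x)‖ ≤ (c * ‖x‖) * |t - 0| := by
      apply intervalIntegral.norm_integral_le_of_norm_le_const
      intro s hs
      rw [Set.uIoc_of_le ht.le] at hs
      calc ‖f (S.T s x)‖ ≤ ‖f‖ * ‖S.T s x‖ := f.le_opNorm _
        _ ≤ 1 * (‖S.T s‖ * ‖x‖) :=
            mul_le_mul hf1 ((S.T s).le_opNorm x) (norm_nonneg _) zero_le_one
        _ ≤ c * ‖x‖ := by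
            rw [one_mul]
            exact mul_le_mul_of_nonneg_right (hbound s hs) (norm_nonneg x)
    calc ‖φL x‖ = ‖(t:ℂ)⁻¹‖ * ‖∫ s in (0:ℝ)..t, f (S.T s x)‖ := norm_mul _ _
      _ ≤ t⁻¹ * ((c * ‖x‖) * |t - 0|) := by
          rw [hnt]
          exact mul_le_mul_of_nonneg_left hI (by positivity)
      _ = c * ‖x‖ := by
          rw [sub_zero, abs_of_pos ht]
          field_simp
  let φ : wDual X := φL.mkContinuous c hbL
  have hφapp : ∀ x : X, φ x = (t : ℂ)⁻¹ * ∫ s in (0:ℝ)..t, f (S.T s x) := fun x => rfl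
  have hφnorm : ‖φ‖ ≤ c := LinearMap.mkContinuous_norm_le φL hc.le hbL
  have hcirc : φ ∈ circDual X τ := by
    intro u x hbd hconv
    rw [Metric.tendsto_atTop]
    intro ε hε
    have hUmem : (⇑f ⁻¹' Metric.ball 0 (ε/2)) ∈ @nhds X τ 0 := by
      have hca : @ContinuousAt X ℂ τ _ ⇑f 0 := hfτ.continuousAt
      have hball : Metric.ball (0:ℂ) (ε/2) ∈ nhds (f 0) := by
        rw [map_zero]
        exact Metric.ball_mem_nhds _ (by linarith)
      exact hca.preimage_mem_nhds hball
    have hev := S.biEquicont u x hbd hconv t ht.le _ hUmem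
    rw [Filter.eventually_atTop] at hev
    obtain ⟨N, hN⟩ := hev
    refine ⟨N, fun n hn => ?_⟩
    have key : ∀ s ∈ Set.uIoc (0:ℝ) t, ‖f (S.T s (u n)) - f (S.T s x)‖ ≤ ε/2 := by
      intro s hs
      rw [Set.uIoc_of_le ht.le] at hs
      have hmem := hN n hn s ⟨hs.1.le, hs.2⟩
      rw [Set.mem_preimage, Metric.mem_ball, dist_zero_right] at hmem
      have heq : f (S.T s (u n)) - f (S.T s x) = f (S.T s (u n - x)) := by
        rw [map_sub, map_sub]
      rw [heq]
      exact hmem.le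
    have hdiff : φ (u n) - φ x
        = (t:ℂ)⁻¹ * ∫ s in (0:ℝ)..t, (f (S.T s (u n)) - f (S.T s x)) := by
      rw [hφapp, hφapp, ← mul_sub,
        intervalIntegral.integral_sub (hgint (u n) 0 t le_rfl ht.le)
          (hgint x 0 t le_rfl ht.le)]
    rw [dist_eq_norm, hdiff]
    have hIn : ‖∫ s in (0:ℝ)..t, (f (S.T s (u n)) - f (S.T s x))‖ ≤ (ε/2) * |t - 0| :=
      intervalIntegral.norm_integral_le_of_norm_le_const key
    have hfin : ‖(t:ℂ)⁻¹ * ∫ s in (0:ℝ)..t, (f (S.T s (u n)) - f (S.T s x))‖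
        ≤ t⁻¹ * ((ε/2) * |t - 0|) := by
      rw [norm_mul, hnt]
      exact mul_le_mul_of_nonneg_left hIn (by positivity)
    rw [sub_zero, abs_of_pos ht] at hfin
    calc ‖(t:ℂ)⁻¹ * ∫ s in (0:ℝ)..t, (f (S.T s (u n)) - f (S.T s x))‖
        ≤ t⁻¹ * (ε/2 * t) := hfin
      _ = ε/2 := by field_simp
      _ < ε := by linarith
  obtain ⟨M, hM1, ω, hMω⟩ := S.expBounded
  have hMpos : (0:ℝ) < M := lt_of_lt_of_le zero_lt_one hM1
  set C : ℝ := M * Real.exp (|ω| * (t+1)) with hCdef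
  have hCpos : 0 < C := mul_pos hMpos (Real.exp_pos _)
  have hTC : ∀ s ∈ Set.Ioc (0:ℝ) (t+1), ‖S.T s‖ ≤ C := by
    intro s hs
    have h2 : Real.exp (ω * s) ≤ Real.exp (|ω| * (t+1)) := by
      apply Real.exp_le_exp.2
      calc ω * s ≤ |ω| * s := mul_le_mul_of_nonneg_right (le_abs_self ω) hs.1.le
        _ ≤ |ω| * (t+1) := mul_le_mul_of_nonneg_left hs.2 (abs_nonneg ω)
    calc ‖S.T s‖ ≤ M * Real.exp (ω * s) := hMω s hs.1.le
      _ ≤ C := mul_le_mul_of_nonneg_left h2 hMpos.le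
  have hkey : ∀ r ∈ Set.Ioo (0:ℝ) 1, ‖dualComp φ (S.T r) - φ‖ ≤ (2*C/t) * r := by
    intro r hr
    have h2Ct : 0 ≤ 2*C/t * r := by
      apply mul_nonneg (div_nonneg (by linarith) ht.le) hr.1.le
    apply ContinuousLinearMap.opNorm_le_bound _ h2Ct
    intro x
    have hcomp : ∀ s ∈ Set.uIcc (0:ℝ) t, f (S.T s (S.T r x)) = f (S.T (s + r) x) := by
      intro s hs
      rw [Set.uIcc_of_le ht.le] at hs
      rw [S.map_add s hs.1 r hr.1.le]
      rfl
    have h1 : dualComp φ (S.T r) x = (t:ℂ)⁻¹ * ∫ s in (0:ℝ)..t, f (S.T (s+r) x) := by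
      have hd : dualComp φ (S.T r) x = φ (S.T r x) := rfl
      rw [hd, hφapp]
      congr 1
      exact intervalIntegral.integral_congr hcomp
    have h2 : (∫ s in (0:ℝ)..t, f (S.T (s+r) x)) = ∫ s in r..(t+r), f (S.T s x) := by
      have := intervalIntegral.integral_comp_add_right (a := 0) (b := t)
        (fun s => f (S.T s x)) r
      simpa using this
    have ha : IntervalIntegrable (fun s : ℝ => f (S.T s x)) MeasureTheory.volume 0 r :=
      hgint x 0 r le_rfl hr.1.le
    have hb' : IntervalIntegrable (fun s : ℝ => f (S.T s x)) MeasureTheory.volume r (t+r) :=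
      hgint x r (t+r) hr.1.le (by linarith [hr.1])
    have hc' : IntervalIntegrable (fun s : ℝ => f (S.T s x)) MeasureTheory.volume 0 t :=
      hgint x 0 t le_rfl ht.le
    have hd' : IntervalIntegrable (fun s : ℝ => f (S.T s x)) MeasureTheory.volume t (t+r) :=
      hgint x t (t+r) ht.le (by linarith [hr.1])
    have hch1 := intervalIntegral.integral_add_adjacent_intervals ha hb'
    have hch2 := intervalIntegral.integral_add_adjacent_intervals hc' hd'
    have hdiffint : (∫ s in r..(t+r), f (S.T s x)) - ∫ s in (0:ℝ)..t, f (S.T s x)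
        = (∫ s in t..(t+r), f (S.T s x)) - ∫ s in (0:ℝ)..r, f (S.T s x) := by
      linear_combination hch1 - hch2
    have hI1 : ‖∫ s in t..(t+r), f (S.T s x)‖ ≤ (C * ‖x‖) * |(t+r) - t| := by
      apply intervalIntegral.norm_integral_le_of_norm_le_const
      intro s hs
      rw [Set.uIoc_of_le (by linarith [hr.1] : t ≤ t + r)] at hs
      have hsm : s ∈ Set.Ioc (0:ℝ) (t+1) := ⟨lt_trans ht hs.1, by linarith [hs.2, hr.2.le]⟩
      calc ‖f (S.T s x)‖ ≤ ‖f‖ * ‖S.T s x‖ := f.le_opNorm _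
        _ ≤ 1 * (‖S.T s‖ * ‖x‖) :=
            mul_le_mul hf1 ((S.T s).le_opNorm x) (norm_nonneg _) zero_le_one
        _ ≤ C * ‖x‖ := by
            rw [one_mul]
            exact mul_le_mul_of_nonneg_right (hTC s hsm) (norm_nonneg x)
    have hI2 : ‖∫ s in (0:ℝ)..r, f (S.T s x)‖ ≤ (C * ‖x‖) * |r - 0| := by
      apply intervalIntegral.norm_integral_le_of_norm_le_const
      intro s hs
      rw [Set.uIoc_of_le hr.1.le] at hs
      have hsm : s ∈ Set.Ioc (0:ℝ) (t+1) := ⟨hs.1, by linarith [hs.2, hr.2.le]⟩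
      calc ‖f (S.T s x)‖ ≤ ‖f‖ * ‖S.T s x‖ := f.le_opNorm _
        _ ≤ 1 * (‖S.T s‖ * ‖x‖) :=
            mul_le_mul hf1 ((S.T s).le_opNorm x) (norm_nonneg _) zero_le_one
        _ ≤ C * ‖x‖ := by
            rw [one_mul]
            exact mul_le_mul_of_nonneg_right (hTC s hsm) (norm_nonneg x)
    have e1 : |(t+r) - t| = r := by rw [show (t+r) - t = r by ring, abs_of_pos hr.1]
    have e2 : |r - (0:ℝ)| = r := by rw [sub_zero, abs_of_pos hr.1]
    rw [e1] at hI1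
    rw [e2] at hI2
    have happ : (dualComp φ (S.T r) - φ) x
        = (t:ℂ)⁻¹ * ((∫ s in t..(t+r), f (S.T s x)) - ∫ s in (0:ℝ)..r, f (S.T s x)) := by
      have hsa : (dualComp φ (S.T r) - φ) x = dualComp φ (S.T r) x - φ x := rfl
      rw [hsa, h1, h2, hφapp, ← mul_sub, hdiffint]
    rw [happ, norm_mul, hnt]
    have hsum : ‖(∫ s in t..(t+r), f (S.T s x)) - ∫ s in (0:ℝ)..r, f (S.T s x)‖
        ≤ C * ‖x‖ * r + C * ‖x‖ * r :=
      le_trans (norm_sub_le _ _) (add_le_add hI1 hI2)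
    calc t⁻¹ * ‖(∫ s in t..(t+r), f (S.T s x)) - ∫ s in (0:ℝ)..r, f (S.T s x)‖
        ≤ t⁻¹ * (C * ‖x‖ * r + C * ‖x‖ * r) :=
          mul_le_mul_of_nonneg_left hsum (by positivity)
      _ = (2*C/t) * r * ‖x‖ := by field_simp; ring
  have hsun2 : Filter.Tendsto (fun r : ℝ => dualComp φ (S.T r))
      (nhdsWithin 0 (Set.Ioi 0)) (nhds φ) := by
    rw [tendsto_iff_norm_sub_tendsto_zero]
    apply squeeze_zero' (Filter.Eventually.of_forall fun r => norm_nonneg _)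
    · filter_upwards [Ioo_mem_nhdsGT_of_mem (Set.left_mem_Ico.2 zero_lt_one)] with r hr
      exact hkey r hr
    · have hten : Filter.Tendsto (fun r : ℝ => (2*C/t) * r) (nhds 0) (nhds 0) := by
        have h := Filter.Tendsto.const_mul (2*C/t)
          (tendsto_id : Filter.Tendsto id (nhds (0:ℝ)) (nhds 0))
        simpa using h
      exact hten.mono_left nhdsWithin_le_nhds
  exact ⟨φ, ⟨hcirc, hsun2⟩, hφnorm, hφapp⟩

end AuxSun

theorem bulletNorm_equivalent
    {X : Type*} [NormedAddCommGroup X] [NormedSpace ℂ X] [CompleteSpace X]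
    (τ : TopologicalSpace X)
    (hstd : StdAssumptions X τ) (hdual : DualAssumptions X τ)
    (γ : TopologicalSpace X) (hmix : IsMixedTopology X τ γ) (hmazur : MazurIn X γ)
    (S : BiContinuousSemigroup X τ) :
    ∀ x : X, bulletNorm S x ≤ ‖x‖ ∧
      ‖x‖ ≤ Filter.limsup (fun t : ℝ => ‖S.T t‖) (nhdsWithin 0 (Set.Ioi 0)) * bulletNorm S x := by
  clear hmazur hmix hdual
  clear γ
  intro x
  have hub : ∀ r ∈ {r : ℝ | ∃ f ∈ sunDual S, ‖f‖ ≤ 1 ∧ r = ‖f x‖}, r ≤ ‖x‖ := by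
    rintro r ⟨f, hf, hf1, rfl⟩
    calc ‖f x‖ ≤ ‖f‖ * ‖x‖ := f.le_opNorm x
      _ ≤ 1 * ‖x‖ := mul_le_mul_of_nonneg_right hf1 (norm_nonneg x)
      _ = ‖x‖ := one_mul _
  have hbdd : BddAbove {r : ℝ | ∃ f ∈ sunDual S, ‖f‖ ≤ 1 ∧ r = ‖f x‖} := ⟨‖x‖, hub⟩
  have h0mem : (0:ℝ) ∈ {r : ℝ | ∃ f ∈ sunDual S, ‖f‖ ≤ 1 ∧ r = ‖f x‖} :=
    ⟨0, zero_mem_sunDual S, by simp, by simp⟩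
  have hbn0 : 0 ≤ bulletNorm S x := le_csSup hbdd h0mem
  have part1 : bulletNorm S x ≤ ‖x‖ := Real.sSup_le hub (norm_nonneg x)
  refine ⟨part1, ?_⟩
  set L := Filter.limsup (fun t : ℝ => ‖S.T t‖) (nhdsWithin 0 (Set.Ioi 0)) with hL
  obtain ⟨M, hM1, ω, hMω⟩ := S.expBounded
  have hbddu : Filter.IsBoundedUnder (· ≤ ·) (nhdsWithin (0:ℝ) (Set.Ioi 0))
      (fun t : ℝ => ‖S.T t‖) := by
    refine ⟨M * Real.exp |ω|, ?_⟩
    rw [Filter.eventually_map]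
    filter_upwards [Ioo_mem_nhdsGT_of_mem (Set.left_mem_Ico.2 zero_lt_one)] with s hs
    calc ‖S.T s‖ ≤ M * Real.exp (ω * s) := hMω s hs.1.le
      _ ≤ M * Real.exp |ω| := by
        apply mul_le_mul_of_nonneg_left _ (by linarith)
        apply Real.exp_le_exp.2
        calc ω * s ≤ |ω| * s := mul_le_mul_of_nonneg_right (le_abs_self ω) hs.1.le
          _ ≤ |ω| * 1 := mul_le_mul_of_nonneg_left hs.2.le (abs_nonneg ω)
          _ = |ω| := mul_one _
  have hkeyf : ∀ f : wDual X, @Continuous X ℂ τ _ ⇑f → ‖f‖ ≤ 1 →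
      ‖f x‖ ≤ L * bulletNorm S x := by
    intro f hfτ hf1
    apply le_of_forall_pos_le_add
    intro η hη
    have hKpos : (0:ℝ) < ‖x‖ + 1 := by positivity
    set ε := η / (2*(‖x‖ + 1)) with hεdef
    have hεpos : 0 < ε := by positivity
    have hlt : ∀ᶠ s in nhdsWithin (0:ℝ) (Set.Ioi 0), ‖S.T s‖ < L + ε :=
      Filter.eventually_lt_of_limsup_lt (lt_add_of_pos_right L hεpos) hbddu
    rw [eventually_nhdsWithin_iff, Metric.eventually_nhds_iff] at hlt
    obtain ⟨δ₁, hδ₁, hlt⟩ := hlt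
    have hcpos : 0 < L + ε := by
      have hmem : δ₁/2 ∈ Set.Ioi (0:ℝ) := Set.mem_Ioi.2 (by linarith)
      have hd : dist (δ₁/2) (0:ℝ) < δ₁ := by
        rw [Real.dist_eq, sub_zero, abs_of_pos (by linarith : (0:ℝ) < δ₁/2)]
        linarith
      exact lt_of_le_of_lt (norm_nonneg _) (hlt hd hmem)
    have h0 : Filter.Tendsto (fun s : ℝ => f (S.T s x)) (nhdsWithin 0 (Set.Ici 0))
        (nhds (f x)) := by
      have hcw : ContinuousWithinAt (fun s : ℝ => f (S.T s x)) (Set.Ici 0) 0 :=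
        contOn_pair S f hfτ x 0 Set.self_mem_Ici
      have hTz : f (S.T 0 x) = f x := by rw [S.map_zero]; rfl
      simpa [ContinuousWithinAt, hTz] using hcw
    have h0' : ∀ᶠ s in nhdsWithin (0:ℝ) (Set.Ici 0), dist (f (S.T s x)) (f x) < η/2 :=
      Metric.tendsto_nhds.mp h0 _ (by linarith)
    rw [eventually_nhdsWithin_iff, Metric.eventually_nhds_iff] at h0'
    obtain ⟨δ₂, hδ₂, h0'⟩ := h0'
    set t := min δ₁ δ₂ / 2 with htdef
    have htpos : 0 < t := div_pos (lt_min hδ₁ hδ₂) two_pos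
    have htδ₁ : t < δ₁ := by
      have h1 : min δ₁ δ₂ ≤ δ₁ := min_le_left _ _
      rw [htdef]; linarith
    have htδ₂ : t < δ₂ := by
      have h1 : min δ₁ δ₂ ≤ δ₂ := min_le_right _ _
      rw [htdef]; linarith
    have hbound : ∀ s ∈ Set.Ioc (0:ℝ) t, ‖S.T s‖ ≤ L + ε := by
      intro s hs
      have hd : dist s (0:ℝ) < δ₁ := by
        rw [Real.dist_eq, sub_zero, abs_of_pos hs.1]
        linarith [hs.2]
      exact (hlt hd (Set.mem_Ioi.2 hs.1)).le
    obtain ⟨φ, hφsun, hφnorm, hφapp⟩ := avg_mem S f hfτ hf1 htpos hcpos hbound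
    have htne : (t:ℂ) ≠ 0 := Complex.ofReal_ne_zero.2 (ne_of_gt htpos)
    have hint : IntervalIntegrable (fun s : ℝ => f (S.T s x)) MeasureTheory.volume 0 t := by
      apply ContinuousOn.intervalIntegrable
      apply (contOn_pair S f hfτ x).mono
      rw [Set.uIcc_of_le htpos.le]
      exact fun s hs => hs.1
    have hconst : IntervalIntegrable (fun _ : ℝ => f x) MeasureTheory.volume 0 t :=
      intervalIntegrable_const
    have hfx : (t:ℂ)⁻¹ * ∫ _ in (0:ℝ)..t, f x = f x := by
      rw [intervalIntegral.integral_const, sub_zero, Complex.real_smul, ← mul_assoc,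
        inv_mul_cancel₀ htne, one_mul]
    have hdiff : φ x - f x = (t:ℂ)⁻¹ * ∫ s in (0:ℝ)..t, (f (S.T s x) - f x) := by
      rw [hφapp x, intervalIntegral.integral_sub hint hconst, mul_sub, hfx]
    have hInorm : ‖∫ s in (0:ℝ)..t, (f (S.T s x) - f x)‖ ≤ (η/2) * |t - 0| := by
      apply intervalIntegral.norm_integral_le_of_norm_le_const
      intro s hs
      rw [Set.uIoc_of_le htpos.le] at hs
      have hd : dist s (0:ℝ) < δ₂ := by
        rw [Real.dist_eq, sub_zero, abs_of_pos hs.1]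
        linarith [hs.2]
      have hdd := h0' hd (Set.mem_Ici.2 hs.1.le)
      rw [dist_eq_norm] at hdd
      exact hdd.le
    have hnt : ‖(t:ℂ)⁻¹‖ = t⁻¹ := by
      rw [norm_inv]
      simp [Real.norm_eq_abs, abs_of_pos htpos]
    have hφfx : ‖φ x - f x‖ ≤ η/2 := by
      rw [hdiff, norm_mul, hnt]
      calc t⁻¹ * ‖∫ s in (0:ℝ)..t, (f (S.T s x) - f x)‖
          ≤ t⁻¹ * ((η/2) * |t - 0|) := mul_le_mul_of_nonneg_left hInorm (by positivity)
        _ = η/2 := by rw [sub_zero, abs_of_pos htpos]; field_simp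
    obtain ⟨ψ, hψsun, hψnorm, hψeq⟩ := exists_scaled S hφsun hcpos hφnorm x
    have hψle : ‖ψ x‖ ≤ bulletNorm S x := le_csSup hbdd ⟨ψ, hψsun, hψnorm, rfl⟩
    have hφxle : ‖φ x‖ ≤ (L + ε) * bulletNorm S x := by
      rw [hψeq]
      exact mul_le_mul_of_nonneg_left hψle hcpos.le
    have hεK : ε * bulletNorm S x + η/2 ≤ η := by
      have h1 : ε * bulletNorm S x ≤ ε * (‖x‖ + 1) :=
        mul_le_mul_of_nonneg_left (by linarith) hεpos.le
      have h2 : ε * (‖x‖ + 1) = η/2 := by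
        rw [hεdef]; field_simp
      linarith
    calc ‖f x‖ = ‖φ x + (f x - φ x)‖ := by rw [show φ x + (f x - φ x) = f x by ring]
      _ ≤ ‖φ x‖ + ‖f x - φ x‖ := norm_add_le _ _
      _ ≤ (L + ε) * bulletNorm S x + η/2 :=
          add_le_add hφxle (by rwa [norm_sub_rev] at hφfx)
      _ = L * bulletNorm S x + (ε * bulletNorm S x + η/2) := by ring
      _ ≤ L * bulletNorm S x + η := by linarith
  exact (hstd.norming x).2 (by
    rintro r ⟨f, hfτ, hf1, rfl⟩
    exact hkeyf f hfτ hf1)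


end
end

section
/- Under the standard and dual assumptions, let (T(t)) be τ-bi-continuous with generator A and let λ ∈ ρ(A) with R(λ,A)'(X^•) ⊆ D(A^•), where A^• generates the C₀-semigroup T^• on X^•. Then λ ∈ ρ(A^•) and R(λ,A^•) equals the restriction of R(λ,A)' to X^•. -/
noncomputable section

open Filter Topology MeasureTheory

private lemma tau_tendsto_iff_sub' {Y : Type*} [AddCommGroup Y] (t : TopologicalSpace Y)
    (hg : @IsTopologicalAddGroup Y t _) {α : Type*} {l : Filter α} {u : α → Y} {a : Y} :
    Filter.Tendsto u l (@nhds Y t a) ↔ Filter.Tendsto (fun n => u n - a) l (@nhds Y t 0) := by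
  letI := t
  exact tendsto_sub_nhds_zero_iff.symm

private lemma bdd_of_eventually' {Y : Type*} [SeminormedAddGroup Y] (u : ℕ → Y) (C : ℝ)
    (h : ∀ᶠ n in Filter.atTop, ‖u n‖ ≤ C) : ∃ C', ∀ n, ‖u n‖ ≤ C' := by
  obtain ⟨N, hN⟩ := Filter.eventually_atTop.mp h
  have hC0 : 0 ≤ C := le_trans (norm_nonneg (u N)) (hN N le_rfl)
  refine ⟨C + ∑ i ∈ Finset.range N, ‖u i‖, fun n => ?_⟩
  have hsum : 0 ≤ ∑ i ∈ Finset.range N, ‖u i‖ :=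
    Finset.sum_nonneg fun i _ => norm_nonneg _
  rcases le_or_gt N n with hn | hn
  · have := hN n hn; linarith
  · have h1 : ‖u n‖ ≤ ∑ i ∈ Finset.range N, ‖u i‖ :=
      Finset.single_le_sum (fun i _ => norm_nonneg (u i)) (Finset.mem_range.mpr hn)
    linarith

private lemma clm_real_smul {E F : Type*} [NormedAddCommGroup E] [NormedSpace ℂ E]
    [NormedAddCommGroup F] [NormedSpace ℂ F] (f : E →L[ℂ] F) (r : ℝ) (x : E) :
    f (r • x) = r • f x := f.map_smul_of_tower r x

private lemma clm_sub' {E F : Type*} [NormedAddCommGroup E] [NormedSpace ℂ E]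
    [NormedAddCommGroup F] [NormedSpace ℂ F] (f : E →L[ℂ] F) (x y : E) :
    f (x - y) = f x - f y := map_sub f x y

private lemma clm_csmul {E F : Type*} [NormedAddCommGroup E] [NormedSpace ℂ E]
    [NormedAddCommGroup F] [NormedSpace ℂ F] (f : E →L[ℂ] F) (c : ℂ) (x : E) :
    f (c • x) = c • f x := map_smul f c x

private lemma wdual_ext {E : Type*} [NormedAddCommGroup E] [NormedSpace ℂ E]
    {f g : E →L[ℂ] ℂ} (h : ∀ x, f x = g x) : f = g := ContinuousLinearMap.ext h

theorem sun_resolvent_eq_restriction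
    {X : Type*} [NormedAddCommGroup X] [NormedSpace ℂ X] [CompleteSpace X]
    (τ : TopologicalSpace X)
    (hstd : StdAssumptions X τ) (hdual : DualAssumptions X τ)
    (S : BiContinuousSemigroup X τ)
    (D : Set X) (A : X → X) (hgen : IsBiGenerator S D A)
    (Db : Set (wDual X)) (Ab : wDual X → wDual X) (hsun : IsSunGenerator S Db Ab)
    (l : ℂ) (R : bOp X) (hres : IsResolvent D A l R)
    (hinv : ∀ f ∈ sunDual S, dualComp f R ∈ Db) :
    (∀ f ∈ sunDual S, l • dualComp f R - Ab (dualComp f R) = f) ∧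
    ∀ f ∈ Db, dualComp (l • f - Ab f) R = f := by
  obtain ⟨hres1, hres2⟩ := hres
  -- Pointwise evaluation of the norm-limit defining `Ab`
  have hAbEval : ∀ f ∈ Db, ∀ x : X,
      Filter.Tendsto (fun t : ℝ => f (t⁻¹ • (S.T t x - x)))
        (nhdsWithin 0 (Set.Ioi 0)) (nhds (Ab f x)) := by
    intro f hf x
    have hT := (hsun.2 f hf).2
    have h1 : Filter.Tendsto
        (fun t : ℝ => (ContinuousLinearMap.apply ℂ ℂ x) (t⁻¹ • (dualComp f (S.T t) - f)))
        (nhdsWithin 0 (Set.Ioi 0)) (nhds ((ContinuousLinearMap.apply ℂ ℂ x) (Ab f))) :=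
      ((ContinuousLinearMap.apply ℂ ℂ x).continuous.tendsto (Ab f)).comp hT
    have he : ∀ t : ℝ, (ContinuousLinearMap.apply ℂ ℂ x) (t⁻¹ • (dualComp f (S.T t) - f))
        = f (t⁻¹ • (S.T t x - x)) := by
      intro t
      rw [clm_real_smul f, clm_sub' f]
      rfl
    have h3 := h1.congr he
    simpa only [ContinuousLinearMap.apply_apply] using h3
  -- the test sequence tₙ = 1/(n+1)
  set tseq : ℕ → ℝ := fun n => ((n : ℝ) + 1)⁻¹ with htseq
  have htpos : ∀ n, 0 < tseq n := fun n => by positivity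
  have htle1 : ∀ n, tseq n ≤ 1 := fun n => by
    have h1 : (1:ℝ) ≤ (n:ℝ) + 1 := by
      have := Nat.cast_nonneg (α := ℝ) n; linarith
    have h2 : tseq n = ((n:ℝ) + 1)⁻¹ := rfl
    rw [h2, inv_le_one_iff₀]
    right; exact h1
  have htto : Filter.Tendsto tseq Filter.atTop (nhdsWithin 0 (Set.Ioi 0)) := by
    refine tendsto_nhdsWithin_of_tendsto_nhds_of_eventually_within tseq ?_
      (Filter.Eventually.of_forall fun n => htpos n)
    simpa [htseq, one_div] using tendsto_one_div_add_atTop_nhds_zero_nat (𝕜 := ℝ)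
  -- sequential limit of f(difference quotients) for τ-sequentially continuous f
  have hseq : ∀ f ∈ circDual X τ, ∀ x ∈ D,
      Filter.Tendsto (fun n => f ((tseq n)⁻¹ • (S.T (tseq n) x - x))) Filter.atTop
        (nhds (f (A x))) := by
    intro f hf x hx
    obtain ⟨C, hC⟩ := ((hgen.1 x).1 hx).2
    have hconv : Filter.Tendsto (fun n => (tseq n)⁻¹ • (S.T (tseq n) x - x)) Filter.atTop
        (@nhds X τ (A x)) := (hgen.2 x hx).comp htto
    have hbdd : ∃ C', ∀ n, ‖(tseq n)⁻¹ • (S.T (tseq n) x - x)‖ ≤ C' := by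
      refine ⟨C, fun n => ?_⟩
      have h1 := hC (tseq n) ⟨htpos n, htle1 n⟩
      have h2 : ‖(tseq n)⁻¹ • (S.T (tseq n) x - x)‖
          = (tseq n)⁻¹ * ‖S.T (tseq n) x - x‖ := by
        rw [norm_smul, Real.norm_eq_abs, abs_of_pos (inv_pos.mpr (htpos n))]
      rw [h2]
      calc (tseq n)⁻¹ * ‖S.T (tseq n) x - x‖
          ≤ (tseq n)⁻¹ * (C * tseq n) :=
            mul_le_mul_of_nonneg_left h1 (inv_pos.mpr (htpos n)).le
        _ = C := by
            rw [mul_comm C, ← mul_assoc, inv_mul_cancel₀ (htpos n).ne', one_mul]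
    exact hf _ _ hbdd hconv
  -- `Ab f` agrees with the adjoint of `A` on `D`
  have hkey : ∀ f ∈ Db, ∀ x ∈ D, Ab f x = f (A x) := by
    intro f hf x hx
    have hfcirc : f ∈ circDual X τ := ((hsun.1 f).1 hf).1.1
    have h1 : Filter.Tendsto (fun n => f ((tseq n)⁻¹ • (S.T (tseq n) x - x)))
        Filter.atTop (nhds (Ab f x)) := (hAbEval f hf x).comp htto
    exact tendsto_nhds_unique h1 (hseq f hfcirc x hx)
  -- τ-continuity of T t along bounded τ-convergent sequences
  have hTtau : ∀ t ≥ (0:ℝ), ∀ (u : ℕ → X) (y : X), (∃ C, ∀ n, ‖u n‖ ≤ C) →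
      Filter.Tendsto u Filter.atTop (@nhds X τ y) →
      Filter.Tendsto (fun n => S.T t (u n)) Filter.atTop (@nhds X τ (S.T t y)) := by
    intro t ht u y hb hu
    rw [tau_tendsto_iff_sub' τ hstd.addGroup]
    refine Filter.tendsto_def.mpr fun U hU => ?_
    have h2 := S.biEquicont u y hb hu t ht U hU
    filter_upwards [h2] with n hn
    have h3 := hn t ⟨ht, le_rfl⟩
    simpa [map_sub] using h3
  -- T t leaves D invariant and commutes with A there
  have hTD : ∀ t ≥ (0:ℝ), ∀ x ∈ D, S.T t x ∈ D ∧ A (S.T t x) = S.T t (A x) := by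
    intro t ht x hx
    obtain ⟨C, hC⟩ := ((hgen.1 x).1 hx).2
    have hptw : ∀ s : ℝ, 0 < s →
        s⁻¹ • (S.T s (S.T t x) - S.T t x) = S.T t (s⁻¹ • (S.T s x - x)) := by
      intro s hs
      have e1 : S.T s (S.T t x) = S.T t (S.T s x) := by
        have e2 := S.map_add s hs.le t ht
        have e3 := S.map_add t ht s hs.le
        rw [add_comm] at e2
        have : opComp (S.T s) (S.T t) = opComp (S.T t) (S.T s) := by rw [← e2, e3]
        calc S.T s (S.T t x) = opComp (S.T s) (S.T t) x := rfl
          _ = opComp (S.T t) (S.T s) x := by rw [this]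
          _ = S.T t (S.T s x) := rfl
      rw [e1, ← clm_sub' (S.T t), ← clm_real_smul (S.T t)]
    have hlim : Filter.Tendsto (fun s : ℝ => s⁻¹ • (S.T s (S.T t x) - S.T t x))
        (nhdsWithin 0 (Set.Ioi 0)) (@nhds X τ (S.T t (A x))) := by
      rw [Filter.tendsto_iff_seq_tendsto]
      intro sn hsn
      have hpos : ∀ᶠ n in Filter.atTop, 0 < sn n := by
        filter_upwards [hsn.eventually eventually_mem_nhdsWithin] with n hn
        exact hn
      have hle1 : ∀ᶠ n in Filter.atTop, sn n ≤ 1 := by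
        have h0 := hsn.mono_right nhdsWithin_le_nhds
        exact h0.eventually (eventually_le_nhds one_pos)
      set vn : ℕ → X := fun n => (sn n)⁻¹ • (S.T (sn n) x - x) with hvn
      have hv : Filter.Tendsto vn Filter.atTop (@nhds X τ (A x)) :=
        (hgen.2 x hx).comp hsn
      have hbddE : ∀ᶠ n in Filter.atTop, ‖vn n‖ ≤ C := by
        filter_upwards [hpos, hle1] with n hn1 hn2
        have h1 := hC (sn n) ⟨hn1, hn2⟩
        have h2 : ‖vn n‖ = (sn n)⁻¹ * ‖S.T (sn n) x - x‖ := by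
          rw [hvn]
          simp only []
          rw [norm_smul, Real.norm_eq_abs, abs_of_pos (inv_pos.mpr hn1)]
        rw [h2]
        calc (sn n)⁻¹ * ‖S.T (sn n) x - x‖ ≤ (sn n)⁻¹ * (C * sn n) :=
              mul_le_mul_of_nonneg_left h1 (inv_pos.mpr hn1).le
          _ = C := by
              rw [mul_comm C, ← mul_assoc, inv_mul_cancel₀ (ne_of_gt hn1), one_mul]
      obtain ⟨C', hC'⟩ := bdd_of_eventually' vn C hbddE
      have hTv := hTtau t ht vn (A x) ⟨C', hC'⟩ hv
      refine hTv.congr' ?_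
      filter_upwards [hpos] with n hn
      exact (hptw (sn n) hn).symm
    have hbd : ∃ C0 : ℝ, ∀ s ∈ Set.Ioc (0:ℝ) 1, ‖S.T s (S.T t x) - S.T t x‖ ≤ C0 * s := by
      refine ⟨‖S.T t‖ * C, fun s hs => ?_⟩
      have e1 : S.T s (S.T t x) - S.T t x = S.T t (S.T s x - x) := by
        have := hptw s hs.1
        have h4 := congrArg (fun w => (s : ℝ) • w) this
        simpa [smul_smul, mul_inv_cancel₀ (ne_of_gt hs.1)] using h4
      rw [e1]
      calc ‖S.T t (S.T s x - x)‖ ≤ ‖S.T t‖ * ‖S.T s x - x‖ :=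
            (S.T t).le_opNorm _
        _ ≤ ‖S.T t‖ * (C * s) :=
            mul_le_mul_of_nonneg_left (hC s hs) (norm_nonneg _)
        _ = ‖S.T t‖ * C * s := by ring
    have hmem : S.T t x ∈ D := (hgen.1 _).2 ⟨⟨_, hlim⟩, hbd⟩
    refine ⟨hmem, ?_⟩
    exact @tendsto_nhds_unique X ℝ τ hstd.t2 _ _ _ _ _ (hgen.2 _ hmem) hlim
  -- R commutes with the semigroup
  have hcomm : ∀ t ≥ (0:ℝ), ∀ y : X, R (S.T t y) = S.T t (R y) := by
    intro t ht y
    obtain ⟨hmemD, heq⟩ := hres1 y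
    obtain ⟨hTD1, hTD2⟩ := hTD t ht (R y) hmemD
    have h3 : S.T t y = l • S.T t (R y) - A (S.T t (R y)) := by
      conv_lhs => rw [← heq]
      rw [clm_sub' (S.T t), clm_csmul (S.T t), hTD2]
    rw [h3, hres2 _ hTD1]
  constructor
  · -- part (1)
    intro f hf
    have hfcirc : f ∈ circDual X τ := hf.1
    have hh : dualComp f R ∈ Db := hinv f hf
    refine wdual_ext fun x => ?_
    have h1 : Filter.Tendsto (fun n => (dualComp f R) ((tseq n)⁻¹ • (S.T (tseq n) x - x)))
        Filter.atTop (nhds (Ab (dualComp f R) x)) := (hAbEval _ hh x).comp htto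
    have h2 : ∀ n, (dualComp f R) ((tseq n)⁻¹ • (S.T (tseq n) x - x))
        = f ((tseq n)⁻¹ • (S.T (tseq n) (R x) - R x)) := by
      intro n
      have hR : R ((tseq n)⁻¹ • (S.T (tseq n) x - x))
          = (tseq n)⁻¹ • (S.T (tseq n) (R x) - R x) := by
        rw [clm_real_smul R, clm_sub' R, hcomm _ (htpos n).le x]
      simp only [dualComp, ContinuousLinearMap.comp_apply]
      rw [hR]
    have h1' : Filter.Tendsto (fun n => f ((tseq n)⁻¹ • (S.T (tseq n) (R x) - R x)))
        Filter.atTop (nhds (Ab (dualComp f R) x)) := by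
      refine h1.congr fun n => h2 n
    have hAbx : Ab (dualComp f R) x = f (A (R x)) :=
      tendsto_nhds_unique h1' (hseq f hfcirc (R x) (hres1 x).1)
    have hstep : (l • dualComp f R - Ab (dualComp f R)) x
        = l * f (R x) - Ab (dualComp f R) x := rfl
    rw [hstep, hAbx]
    have h5 := congrArg f (hres1 x).2
    rw [clm_sub' f, clm_csmul f, smul_eq_mul] at h5
    exact h5
  · -- part (2)
    intro f hf
    refine wdual_ext fun x => ?_
    have h1 := hres1 x
    have h2 : Ab f (R x) = f (A (R x)) := hkey f hf (R x) h1.1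
    have hstep : (dualComp (l • f - Ab f) R) x = l * f (R x) - Ab f (R x) := rfl
    rw [hstep, h2]
    have h5 := congrArg f h1.2
    rw [clm_sub' f, clm_csmul f, smul_eq_mul] at h5
    exact h5

end
end

section
/- Under the standard and dual assumptions with (X,γ) a Mazur space, if G ⊆ X is σ(X,X^∘)-(T(t))-equicontinuous (i.e., for each x^∘ ∈ X^∘ the family of functions t ↦ ⟨x^∘, T(t)g⟩, g ∈ G, is equicontinuous at t = 0), then the σ(X,X^∘)-closure and the σ(X,X^•)-closure of G coincide; in particular, σ(X,X^∘)-closed equicontinuous sets are σ(X,X^•)-closed, and the relative σ(X,X^∘)- and σ(X,X^•)-topologies coincide on such G. -/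
noncomputable section

open Filter Topology MeasureTheory

lemma mem_closure_weakTop {X : Type*} [NormedAddCommGroup X] [NormedSpace ℂ X]
    (F : Set (wDual X)) (G : Set X) (x : X) :
    x ∈ @closure X (weakTop F) G ↔
      ∀ s : Finset (wDual X), ↑s ⊆ F → ∀ ε > (0:ℝ),
        ∃ g ∈ G, ∀ f ∈ s, ‖f x - f g‖ < ε := by
  classical
  letI t : TopologicalSpace X := weakTop F
  have hw : (t : TopologicalSpace X) = ⨅ f : F, TopologicalSpace.induced
      (⇑(f : wDual X)) inferInstance := by
    simp only [t, weakTop, iInf_subtype]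
  have hnhds : @nhds X t x = ⨅ f : F, Filter.comap (⇑(f : wDual X)) (nhds ((f : wDual X) x)) := by
    rw [hw, _root_.nhds_iInf]
    exact iInf_congr fun f => nhds_induced _ _
  rw [@mem_closure_iff_nhds X t x G]
  constructor
  · intro hx s hs ε hε
    set U : Set X := ⋂ f ∈ s, (⇑f) ⁻¹' Metric.ball (f x) ε with hU
    have hUmem : U ∈ @nhds X t x := by
      classical
      refine (Filter.biInter_finset_mem s).2 ?_
      intro f hf
      have h1 : @nhds X t x ≤ Filter.comap (⇑f) (nhds (f x)) := by
        rw [hnhds]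
        exact iInf_le _ (⟨f, hs hf⟩ : F)
      exact h1 (Filter.preimage_mem_comap (Metric.ball_mem_nhds _ hε))
    obtain ⟨g, hgU, hgG⟩ := hx U hUmem
    refine ⟨g, hgG, fun f hf => ?_⟩
    have := Set.mem_iInter₂.1 hgU f hf
    rw [Set.mem_preimage, Metric.mem_ball, dist_eq_norm] at this
    rw [norm_sub_rev]
    exact this
  · intro h U hU
    rw [hnhds] at hU
    obtain ⟨I, hIfin, V, hV, rfl⟩ := Filter.mem_iInf.1 hU
    have key : ∀ i : I, ∃ ε > (0:ℝ), ∀ y : X,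
        ‖((i : F) : wDual X) x - ((i : F) : wDual X) y‖ < ε → y ∈ V i := by
      intro i
      obtain ⟨W, hW, hWV⟩ := Filter.mem_comap.1 (hV i)
      obtain ⟨ε, hε, hball⟩ := Metric.mem_nhds_iff.1 hW
      refine ⟨ε, hε, fun y hy => ?_⟩
      apply hWV
      rw [Set.mem_preimage]
      apply hball
      rw [Metric.mem_ball, dist_eq_norm, norm_sub_rev]
      exact hy
    choose εf hεf hVf using key
    haveI : Fintype I := hIfin.fintype
    rcases isEmpty_or_nonempty I with hI | hI
    · obtain ⟨g, hgG, -⟩ := h ∅ (by simp) 1 one_pos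
      exact ⟨g, by simp [Set.iInter_of_empty], hgG⟩
    · haveI : Nonempty I := hI
      set ε₀ : ℝ := Finset.univ.inf' Finset.univ_nonempty εf with hε₀
      have hε₀pos : 0 < ε₀ := by
        rw [hε₀, Finset.lt_inf'_iff]
        exact fun i _ => hεf i
      set s : Finset (wDual X) := Finset.univ.image (fun i : I => ((i : F) : wDual X)) with hs
      have hsF : (↑s : Set (wDual X)) ⊆ F := by
        intro f hf
        simp only [hs, Finset.coe_image, Set.mem_image] at hf
        obtain ⟨i, -, rfl⟩ := hf
        exact ((i : F)).2
      obtain ⟨g, hgG, hg⟩ := h s hsF ε₀ hε₀pos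
      refine ⟨g, Set.mem_iInter.2 fun i => ?_, hgG⟩
      apply hVf i
      have hmem : ((i : F) : wDual X) ∈ s := by
        simp only [hs, Finset.mem_image]
        exact ⟨i, Finset.mem_univ _, rfl⟩
      exact lt_of_lt_of_le (hg _ hmem) (Finset.inf'_le _ (Finset.mem_univ i))
section Aux
variable {X : Type*} [NormedAddCommGroup X] [NormedSpace ℂ X] {τ : TopologicalSpace X}

lemma circDual_tendsto {f : wDual X} (hf : f ∈ circDual X τ) {v : ℕ → X} {x : X} {C : ℝ}
    (hb : ∀ᶠ n in atTop, ‖v n‖ ≤ C)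
    (hv : Tendsto v atTop (@nhds X τ x)) :
    Tendsto (fun n => f (v n)) atTop (nhds (f x)) := by
  obtain ⟨N, hN⟩ := eventually_atTop.1 hb
  have h1 : Tendsto (fun n => v (n + N)) atTop (@nhds X τ x) :=
    hv.comp (tendsto_add_atTop_nat N)
  have h2 := hf (fun n => v (n + N)) x ⟨C, fun n => hN _ (Nat.le_add_left N n)⟩ h1
  exact (Filter.tendsto_add_atTop_iff_nat N).1 h2

lemma Tbound (S : BiContinuousSemigroup X τ) {M ω : ℝ}
    (hbd : ∀ t ≥ (0:ℝ), ‖S.T t‖ ≤ M * Real.exp (ω * t)) {b s : ℝ}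
    (hs : s ∈ Set.Icc 0 b) (x : X) :
    ‖S.T s x‖ ≤ M * Real.exp (|ω| * b) * ‖x‖ := by
  have h1 : ‖S.T s x‖ ≤ ‖S.T s‖ * ‖x‖ := (S.T s).le_opNorm x
  have h2 : ‖S.T s‖ ≤ M * Real.exp (ω * s) := hbd s hs.1
  have h3 : Real.exp (ω * s) ≤ Real.exp (|ω| * b) := by
    apply Real.exp_le_exp.2
    calc ω * s ≤ |ω| * s := mul_le_mul_of_nonneg_right (le_abs_self ω) hs.1
    _ ≤ |ω| * b := mul_le_mul_of_nonneg_left hs.2 (abs_nonneg ω)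
  have hM : 0 ≤ M := le_trans (norm_nonneg _) ((hbd 0 le_rfl).trans (by simp))
  calc ‖S.T s x‖ ≤ (M * Real.exp (ω * s)) * ‖x‖ :=
        le_trans h1 (mul_le_mul_of_nonneg_right h2 (norm_nonneg x))
  _ ≤ M * Real.exp (|ω| * b) * ‖x‖ := by
      apply mul_le_mul_of_nonneg_right _ (norm_nonneg x)
      exact mul_le_mul_of_nonneg_left h3 hM

lemma pairCont (S : BiContinuousSemigroup X τ) {f : wDual X} (hf : f ∈ circDual X τ) (x : X) :
    ContinuousOn (fun s : ℝ => f (S.T s x)) (Set.Ici 0) := by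
  obtain ⟨M, hM, ω, hbd⟩ := S.expBounded
  intro s₀ hs₀
  have hT : Tendsto (fun s => S.T s x) (nhdsWithin s₀ (Set.Ici 0)) (@nhds X τ (S.T s₀ x)) :=
    S.strongCont x s₀ hs₀
  rw [ContinuousWithinAt, Filter.tendsto_iff_seq_tendsto]
  intro u hu
  have humem : ∀ᶠ n in atTop, u n ∈ Set.Ici (0:ℝ) := hu.eventually eventually_mem_nhdsWithin
  have hulim : Tendsto u atTop (nhds s₀) := hu.mono_right nhdsWithin_le_nhds
  have hub : ∀ᶠ n in atTop, u n ≤ s₀ + 1 :=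
    (hulim.eventually_lt_const (by linarith)).mono fun n hn => hn.le
  have hTu : Tendsto (fun n => S.T (u n) x) atTop (@nhds X τ (S.T s₀ x)) := hT.comp hu
  have hbound : ∀ᶠ n in atTop, ‖S.T (u n) x‖ ≤ M * Real.exp (|ω| * (s₀ + 1)) * ‖x‖ := by
    filter_upwards [humem, hub] with n h1 h2
    exact Tbound S hbd ⟨h1, h2⟩ x
  exact circDual_tendsto hf hbound hTu

lemma pairIntegrable (S : BiContinuousSemigroup X τ) {f : wDual X} (hf : f ∈ circDual X τ)
    (x : X) {a c : ℝ} (ha : 0 ≤ a) (hc : 0 ≤ c) :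
    IntervalIntegrable (fun s : ℝ => f (S.T s x)) volume a c := by
  apply ContinuousOn.intervalIntegrable
  apply (pairCont S hf x).mono
  intro s hs
  rw [Set.uIcc, Set.mem_Icc] at hs
  exact le_trans (le_inf ha hc) hs.1

end Aux
section Ces
variable {X : Type*} [NormedAddCommGroup X] [NormedSpace ℂ X] {τ : TopologicalSpace X}

lemma cesaro_functional (S : BiContinuousSemigroup X τ) (hτgrp : @IsTopologicalAddGroup X τ _)
    {f : wDual X} (hf : f ∈ circDual X τ) {t : ℝ} (ht : 0 < t) :
    ∃ Ft : wDual X, Ft ∈ sunDual S ∧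
      ∀ x : X, Ft x = (t : ℂ)⁻¹ * ∫ s in (0:ℝ)..t, f (S.T s x) := by
  obtain ⟨M, hM, ω, hbd⟩ := S.expBounded
  set K : ℝ := ‖f‖ * (M * Real.exp (|ω| * (t + 1))) with hK
  have hM0 : (0:ℝ) ≤ M := by linarith
  have hK0 : 0 ≤ K := mul_nonneg (norm_nonneg f)
    (mul_nonneg hM0 (Real.exp_pos _).le)
  have normb : ∀ x : X, ∀ s ∈ Set.Icc (0:ℝ) (t + 1), ‖f (S.T s x)‖ ≤ K * ‖x‖ := by
    intro x s hs
    calc ‖f (S.T s x)‖ ≤ ‖f‖ * ‖S.T s x‖ := f.le_opNorm _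
    _ ≤ ‖f‖ * (M * Real.exp (|ω| * (t + 1)) * ‖x‖) :=
        mul_le_mul_of_nonneg_left (Tbound S hbd hs x) (norm_nonneg f)
    _ = K * ‖x‖ := by rw [hK]; ring
  have htc : (t : ℂ) ≠ 0 := by
    simpa using ne_of_gt ht
  -- the underlying linear map
  set L : X →ₗ[ℂ] ℂ :=
    { toFun := fun x => (t : ℂ)⁻¹ * ∫ s in (0:ℝ)..t, f (S.T s x)
      map_add' := by
        intro x y
        have heq : (fun s : ℝ => f (S.T s (x + y)))
            = fun s : ℝ => f (S.T s x) + f (S.T s y) := by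
          funext s; rw [map_add, map_add]
        rw [heq, intervalIntegral.integral_add (pairIntegrable S hf x le_rfl ht.le)
          (pairIntegrable S hf y le_rfl ht.le), mul_add]
      map_smul' := by
        intro c x
        dsimp only [RingHom.id_apply, smul_eq_mul]
        have heq : (fun s : ℝ => f (S.T s (c • x)))
            = fun s : ℝ => c * f (S.T s x) := by
          funext s; rw [_root_.map_smul, _root_.map_smul, smul_eq_mul]
        rw [heq, intervalIntegral.integral_const_mul]
        ring } with hL
  have hLval : ∀ x : X, L x = (t : ℂ)⁻¹ * ∫ s in (0:ℝ)..t, f (S.T s x) := fun x => rfl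
  have hLbd : ∀ x : X, ‖L x‖ ≤ K * ‖x‖ := by
    intro x
    rw [hLval, norm_mul]
    have h1 : ‖∫ s in (0:ℝ)..t, f (S.T s x)‖ ≤ K * ‖x‖ * |t - 0| := by
      apply intervalIntegral.norm_integral_le_of_norm_le_const
      intro s hs
      rw [Set.uIoc_of_le ht.le] at hs
      exact normb x s ⟨hs.1.le, by linarith [hs.2]⟩
    have h2 : ‖((t : ℂ))⁻¹‖ = t⁻¹ := by
      rw [norm_inv, Complex.norm_real, Real.norm_of_nonneg ht.le]
    rw [h2]
    calc t⁻¹ * ‖∫ s in (0:ℝ)..t, f (S.T s x)‖ ≤ t⁻¹ * (K * ‖x‖ * |t - 0|) :=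
        mul_le_mul_of_nonneg_left h1 (inv_nonneg.2 ht.le)
    _ = K * ‖x‖ := by
        rw [sub_zero, abs_of_pos ht]
        field_simp
  set Ft : wDual X := LinearMap.mkContinuous L K hLbd with hFt
  have hFtval : ∀ x : X, Ft x = (t : ℂ)⁻¹ * ∫ s in (0:ℝ)..t, f (S.T s x) := fun x => rfl
  -- Ft ∈ circDual
  have hcirc : Ft ∈ circDual X τ := by
    rintro u x ⟨C, hC⟩ hu
    have hC0 : 0 ≤ C := le_trans (norm_nonneg (u 0)) (hC 0)
    have hint : Tendsto (fun n => ∫ s in (0:ℝ)..t, f (S.T s (u n))) atTop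
        (nhds (∫ s in (0:ℝ)..t, f (S.T s x))) := by
      apply intervalIntegral.tendsto_integral_filter_of_dominated_convergence
        (bound := fun _ => K * C)
      · apply Filter.Eventually.of_forall
        intro n
        have hmeas : AEStronglyMeasurable (fun s : ℝ => f (S.T s (u n)))
            (volume.restrict (Set.Icc (0:ℝ) t)) :=
          ((pairCont S hf (u n)).mono Set.Icc_subset_Ici_self).aestronglyMeasurable
            measurableSet_Icc
        rw [Set.uIoc_of_le ht.le]
        exact hmeas.mono_measure (Measure.restrict_mono Set.Ioc_subset_Icc_self le_rfl)
      · apply Filter.Eventually.of_forall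
        intro n
        apply MeasureTheory.ae_of_all
        intro s hs
        rw [Set.uIoc_of_le ht.le] at hs
        calc ‖f (S.T s (u n))‖ ≤ K * ‖u n‖ := normb _ s ⟨hs.1.le, by linarith [hs.2]⟩
        _ ≤ K * C := mul_le_mul_of_nonneg_left (hC n) hK0
      · exact intervalIntegrable_const
      · apply MeasureTheory.ae_of_all
        intro s hs
        rw [Set.uIoc_of_le ht.le] at hs
        have hs0 : (0:ℝ) ≤ s := hs.1.le
        -- T s (u n) → T s x in τ
        have hdiff : Tendsto (fun n => S.T s (u n - x)) atTop (@nhds X τ 0) := by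
          rw [Filter.tendsto_def]
          intro U hU
          have := S.biEquicont u x ⟨C, hC⟩ hu t ht.le U hU
          exact this.mono fun n hn => hn s ⟨hs0, hs.2⟩
        have hTux : Tendsto (fun n => S.T s (u n)) atTop (@nhds X τ (S.T s x)) := by
          letI := τ
          haveI := hτgrp
          have h1 : Tendsto (fun n => S.T s (u n - x) + S.T s x) atTop
              (nhds (0 + S.T s x)) := hdiff.add_const _
          rw [zero_add] at h1
          convert h1 using 2 with n
          rw [map_sub]
          abel
        have hbnd : ∀ᶠ n in atTop, ‖S.T s (u n)‖ ≤ M * Real.exp (|ω| * (t+1)) * C := by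
          apply Filter.Eventually.of_forall
          intro n
          calc ‖S.T s (u n)‖ ≤ M * Real.exp (|ω| * (t+1)) * ‖u n‖ :=
              Tbound S hbd ⟨hs0, by linarith [hs.2]⟩ (u n)
          _ ≤ M * Real.exp (|ω| * (t+1)) * C := by
              apply mul_le_mul_of_nonneg_left (hC n)
              positivity
        exact circDual_tendsto hf hbnd hTux
    have := hint.const_mul ((t : ℂ)⁻¹)
    simpa only [hFtval] using this
  -- Ft ∈ sunDual : norm continuity of the dual orbit
  refine ⟨Ft, ⟨hcirc, ?_⟩, hFtval⟩
  rw [Metric.tendsto_nhdsWithin_nhds]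
  intro ε hε
  refine ⟨min 1 (ε * t / (2 * K + 1)), by positivity, ?_⟩
  intro r hr hrd
  rw [Real.dist_eq, sub_zero, abs_of_pos hr] at hrd
  have hr1 : r ≤ 1 := le_of_lt (lt_of_lt_of_le hrd (min_le_left _ _))
  have hr0 : 0 < r := hr
  rw [dist_eq_norm]
  have hsplit : ∀ x : X, (dualComp Ft (S.T r) - Ft) x
      = (t : ℂ)⁻¹ * ((∫ s in t..(t+r), f (S.T s x)) - ∫ s in (0:ℝ)..r, f (S.T s x)) := by
    intro x
    have e1 : (∫ s in (0:ℝ)..t, f (S.T s (S.T r x))) = ∫ s in (0:ℝ)..t, f (S.T (s + r) x) := by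
      apply intervalIntegral.integral_congr
      intro s hs
      rw [Set.uIcc_of_le ht.le] at hs
      have := S.map_add s hs.1 r hr0.le
      simp only [this, opComp, ContinuousLinearMap.comp_apply]
    have e2 : (∫ s in (0:ℝ)..t, f (S.T (s + r) x)) = ∫ s in r..(t+r), f (S.T s x) := by
      have := intervalIntegral.integral_comp_add_right (a := 0) (b := t)
        (fun s => f (S.T s x)) r
      rw [this, zero_add]
    have i1 : (∫ s in (0:ℝ)..r, f (S.T s x)) + (∫ s in r..(t+r), f (S.T s x))
        = ∫ s in (0:ℝ)..(t+r), f (S.T s x) :=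
      intervalIntegral.integral_add_adjacent_intervals
        (pairIntegrable S hf x le_rfl hr0.le)
        (pairIntegrable S hf x hr0.le (by linarith))
    have i2 : (∫ s in (0:ℝ)..t, f (S.T s x)) + (∫ s in t..(t+r), f (S.T s x))
        = ∫ s in (0:ℝ)..(t+r), f (S.T s x) :=
      intervalIntegral.integral_add_adjacent_intervals
        (pairIntegrable S hf x le_rfl ht.le)
        (pairIntegrable S hf x ht.le (by linarith))
    have key : (∫ s in r..(t+r), f (S.T s x)) - (∫ s in (0:ℝ)..t, f (S.T s x))
        = (∫ s in t..(t+r), f (S.T s x)) - ∫ s in (0:ℝ)..r, f (S.T s x) := by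
      have h12 := i1.trans i2.symm
      linear_combination h12
    simp only [ContinuousLinearMap.sub_apply, dualComp, ContinuousLinearMap.comp_apply]
    rw [hFtval, hFtval, e1, e2, ← mul_sub, key]
  have hbound2 : ‖dualComp Ft (S.T r) - Ft‖ ≤ (2 * K + 1) * r / t := by
    apply ContinuousLinearMap.opNorm_le_bound _ (by positivity)
    intro x
    rw [hsplit x, norm_mul]
    have hn1 : ‖∫ s in t..(t+r), f (S.T s x)‖ ≤ K * ‖x‖ * r := by
      have := intervalIntegral.norm_integral_le_of_norm_le_const (C := K * ‖x‖)
        (f := fun s => f (S.T s x)) (a := t) (b := t + r) ?_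
      · rw [add_sub_cancel_left, abs_of_pos hr0] at this
        exact this
      · intro s hs
        rw [Set.uIoc_of_le (by linarith : t ≤ t + r)] at hs
        exact normb x s ⟨by linarith [hs.1], by linarith [hs.2]⟩
    have hn2 : ‖∫ s in (0:ℝ)..r, f (S.T s x)‖ ≤ K * ‖x‖ * r := by
      have := intervalIntegral.norm_integral_le_of_norm_le_const (C := K * ‖x‖)
        (f := fun s => f (S.T s x)) (a := 0) (b := r) ?_
      · rw [sub_zero, abs_of_pos hr0] at this
        exact this
      · intro s hs
        rw [Set.uIoc_of_le hr0.le] at hs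
        exact normb x s ⟨hs.1.le, by linarith [hs.2]⟩
    have h2 : ‖((t : ℂ))⁻¹‖ = t⁻¹ := by
      rw [norm_inv, Complex.norm_real, Real.norm_of_nonneg ht.le]
    rw [h2]
    calc t⁻¹ * ‖(∫ s in t..(t+r), f (S.T s x)) - ∫ s in (0:ℝ)..r, f (S.T s x)‖
        ≤ t⁻¹ * (K * ‖x‖ * r + K * ‖x‖ * r) := by
          apply mul_le_mul_of_nonneg_left _ (inv_nonneg.2 ht.le)
          exact le_trans (norm_sub_le _ _) (add_le_add hn1 hn2)
    _ ≤ (2 * K + 1) * r / t * ‖x‖ := by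
        rw [div_mul_eq_mul_div, le_div_iff₀ ht]
        have : t⁻¹ * t = 1 := inv_mul_cancel₀ (ne_of_gt ht)
        calc t⁻¹ * (K * ‖x‖ * r + K * ‖x‖ * r) * t
            = (2 * K) * r * ‖x‖ * (t⁻¹ * t) := by ring
        _ = (2 * K) * r * ‖x‖ := by rw [this, mul_one]
        _ ≤ (2 * K + 1) * r * ‖x‖ := by
            apply mul_le_mul_of_nonneg_right _ (norm_nonneg x)
            apply mul_le_mul_of_nonneg_right _ hr0.le
            linarith
  calc ‖dualComp Ft (S.T r) - Ft‖ ≤ (2 * K + 1) * r / t := hbound2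
  _ < ε := by
      rw [div_lt_iff₀ ht]
      have h3 : r < ε * t / (2 * K + 1) := lt_of_lt_of_le hrd (min_le_right _ _)
      have h4 : (0:ℝ) < 2 * K + 1 := by linarith
      calc (2 * K + 1) * r < (2 * K + 1) * (ε * t / (2 * K + 1)) :=
          (mul_lt_mul_iff_right₀ h4).2 h3
      _ = ε * t := by field_simp

end Ces
section Main
variable {X : Type*} [NormedAddCommGroup X] [NormedSpace ℂ X] {τ : TopologicalSpace X}

lemma closure_sun_subset_circ (S : BiContinuousSemigroup X τ)
    (hτgrp : @IsTopologicalAddGroup X τ _) (G : Set X)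
    (hG : ∀ f ∈ circDual X τ, ∀ ε > (0:ℝ), ∃ δ > (0:ℝ),
      ∀ t ∈ Set.Ico (0:ℝ) δ, ∀ g ∈ G, ‖f (S.T t g) - f g‖ < ε) :
    @closure X (weakTop (sunDual S)) G ⊆ @closure X (weakTop (circDual X τ)) G := by
  classical
  intro x hx
  rw [mem_closure_weakTop] at hx ⊢
  intro s hs ε hε
  rcases Finset.eq_empty_or_nonempty s with rfl | hsne
  · obtain ⟨g, hgG, -⟩ := hx ∅ (by simp) ε hε
    exact ⟨g, hgG, by simp⟩
  have hε3 : (0:ℝ) < ε / 3 := by linarith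
  have key : ∀ f ∈ s, ∃ δ > (0:ℝ),
      (∀ r ∈ Set.Ico (0:ℝ) δ, ∀ g ∈ G, ‖f (S.T r g) - f g‖ < ε / 3) ∧
      (∀ r ∈ Set.Ico (0:ℝ) δ, ‖f (S.T r x) - f x‖ < ε / 3) := by
    intro f hf
    have hfc : f ∈ circDual X τ := hs hf
    obtain ⟨δ₁, hδ₁, h1⟩ := hG f hfc (ε / 3) hε3
    -- continuity at 0 of r ↦ f (T r x)
    have hc : Tendsto (fun r : ℝ => f (S.T r x)) (nhdsWithin 0 (Set.Ici 0))
        (nhds (f (S.T 0 x))) := by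
      have h := pairCont S hfc x 0 Set.self_mem_Ici
      exact h
    have h0 : f (S.T 0 x) = f x := by rw [S.map_zero]; rfl
    rw [h0, Metric.tendsto_nhdsWithin_nhds] at hc
    obtain ⟨δ₂, hδ₂, h2⟩ := hc (ε / 3) hε3
    refine ⟨min δ₁ δ₂, lt_min hδ₁ hδ₂, ?_, ?_⟩
    · intro r hr g hg
      exact h1 r ⟨hr.1, lt_of_lt_of_le hr.2 (min_le_left _ _)⟩ g hg
    · intro r hr
      have := h2 (x := r) hr.1 (by
        rw [Real.dist_eq, sub_zero, abs_of_nonneg hr.1]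
        exact lt_of_lt_of_le hr.2 (min_le_right _ _))
      rwa [dist_eq_norm] at this
  choose δf hδf hGf hxf using key
  -- positive time parameter, strictly below all the δ's
  set t0 : ℝ := s.attach.inf' (by simpa using hsne) (fun p => δf p.1 p.2) with ht0
  have ht0pos : 0 < t0 := by
    rw [ht0, Finset.lt_inf'_iff]
    exact fun p _ => hδf p.1 p.2
  set t : ℝ := t0 / 2 with htdef
  have htpos : 0 < t := by positivity
  have htlt : ∀ f (hf : f ∈ s), t < δf f hf := by
    intro f hf
    have : t0 ≤ δf f hf := Finset.inf'_le _ (Finset.mem_attach _ ⟨f, hf⟩)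
    rw [htdef]; linarith
  -- Cesàro functionals
  have hces : ∀ p : {f // f ∈ s}, ∃ Ft : wDual X, Ft ∈ sunDual S ∧
      ∀ y : X, Ft y = (t : ℂ)⁻¹ * ∫ r in (0:ℝ)..t, p.1 (S.T r y) :=
    fun p => cesaro_functional S hτgrp (hs p.2) htpos
  choose Ft hFtsun hFtval using hces
  set s' : Finset (wDual X) := s.attach.image Ft with hs'
  have hs'sub : (↑s' : Set (wDual X)) ⊆ sunDual S := by
    intro F hF
    simp only [hs', Finset.coe_image, Set.mem_image] at hF
    obtain ⟨p, -, rfl⟩ := hF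
    exact hFtsun p
  obtain ⟨g, hgG, hg⟩ := hx s' hs'sub (ε / 3) hε3
  refine ⟨g, hgG, ?_⟩
  intro f hf
  set p : {f // f ∈ s} := ⟨f, hf⟩ with hp
  have hmid : ‖Ft p x - Ft p g‖ < ε / 3 := by
    apply hg
    simp only [hs', Finset.mem_image]
    exact ⟨p, Finset.mem_attach _ _, rfl⟩
  have htc : ((t:ℂ)) ≠ 0 := by simpa using ne_of_gt htpos
  have hnt : ‖((t : ℂ))⁻¹‖ = t⁻¹ := by
    rw [norm_inv, Complex.norm_real, Real.norm_of_nonneg htpos.le]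
  -- generic averaging estimate
  have havg : ∀ (y : X), (∀ r ∈ Set.Ioc (0:ℝ) t, ‖f (S.T r y) - f y‖ ≤ ε / 3) →
      ‖f y - Ft p y‖ ≤ ε / 3 := by
    intro y hy
    have hint : IntervalIntegrable (fun r : ℝ => f (S.T r y)) volume 0 t :=
      pairIntegrable S (hs hf) y le_rfl htpos.le
    have hconst : (∫ _ in (0:ℝ)..t, f y) = (t : ℂ) * f y := by
      rw [intervalIntegral.integral_const, sub_zero, Complex.real_smul]
    have hdiff : f y - Ft p y = (t : ℂ)⁻¹ * ∫ r in (0:ℝ)..t, (f y - f (S.T r y)) := by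
      rw [intervalIntegral.integral_sub intervalIntegrable_const hint, hconst,
        hFtval, mul_sub]
      field_simp
      rfl
    rw [hdiff, norm_mul, hnt]
    have hnorm : ‖∫ r in (0:ℝ)..t, (f y - f (S.T r y))‖ ≤ ε / 3 * |t - 0| := by
      apply intervalIntegral.norm_integral_le_of_norm_le_const
      intro r hr
      rw [Set.uIoc_of_le htpos.le] at hr
      rw [norm_sub_rev]
      exact hy r hr
    rw [sub_zero, abs_of_pos htpos] at hnorm
    calc t⁻¹ * ‖∫ r in (0:ℝ)..t, (f y - f (S.T r y))‖ ≤ t⁻¹ * (ε / 3 * t) :=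
        mul_le_mul_of_nonneg_left hnorm (inv_nonneg.2 htpos.le)
    _ = ε / 3 := by field_simp
  have h1 : ‖f x - Ft p x‖ ≤ ε / 3 := by
    apply havg
    intro r hr
    exact le_of_lt (hxf f hf r ⟨hr.1.le, lt_of_le_of_lt hr.2 (htlt f hf)⟩)
  have h3 : ‖f g - Ft p g‖ ≤ ε / 3 := by
    apply havg
    intro r hr
    exact le_of_lt (hGf f hf r ⟨hr.1.le, lt_of_le_of_lt hr.2 (htlt f hf)⟩ g hgG)
  calc ‖f x - f g‖ = ‖(f x - Ft p x) + (Ft p x - Ft p g) + (Ft p g - f g)‖ := by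
        congr 1; abel
  _ ≤ ‖f x - Ft p x‖ + ‖Ft p x - Ft p g‖ + ‖Ft p g - f g‖ := norm_add₃_le
  _ < ε := by
      rw [norm_sub_rev (Ft p g)] at *
      linarith [h1, hmid, h3]

end Main
lemma closure_mono_topology {Y : Type*} {t1 t2 : TopologicalSpace Y} (h : t1 ≤ t2)
    (C : Set Y) : @closure Y t1 C ⊆ @closure Y t2 C :=
  @closure_minimal Y t1 C _ (@subset_closure Y t2 C)
    ((@isClosed_closure Y t2 C).mono h)

theorem closures_coincide_of_weakEquicontinuous
    {X : Type*} [NormedAddCommGroup X] [NormedSpace ℂ X] [CompleteSpace X]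
    (τ : TopologicalSpace X)
    (hstd : StdAssumptions X τ) (hdual : DualAssumptions X τ)
    (γ : TopologicalSpace X) (hmix : IsMixedTopology X τ γ) (hmazur : MazurIn X γ)
    (S : BiContinuousSemigroup X τ)
    (G : Set X)
    (hG : ∀ f ∈ circDual X τ, ∀ ε > (0:ℝ), ∃ δ > (0:ℝ),
      ∀ t ∈ Set.Ico (0:ℝ) δ, ∀ g ∈ G, ‖f (S.T t g) - f g‖ < ε) :
    @closure X (weakTop (circDual X τ)) G = @closure X (weakTop (sunDual S)) G ∧
    (@IsClosed X (weakTop (circDual X τ)) G → @IsClosed X (weakTop (sunDual S)) G) ∧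
    TopologicalSpace.induced ((↑) : G → X) (weakTop (circDual X τ)) =
      TopologicalSpace.induced ((↑) : G → X) (weakTop (sunDual S)) := by
  have hsub : sunDual S ⊆ circDual X τ := fun f hf => hf.1
  have hle : weakTop (circDual X τ) ≤ weakTop (sunDual S) := by
    unfold weakTop
    exact iInf_le_iInf_of_subset hsub
  have hmain : ∀ C : Set X, C ⊆ G →
      @closure X (weakTop (circDual X τ)) C = @closure X (weakTop (sunDual S)) C := by
    intro C hC
    apply Set.Subset.antisymm
    · exact closure_mono_topology hle C
    · apply closure_sun_subset_circ S hstd.addGroup C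
      intro f hf ε hε
      obtain ⟨δ, hδ, h⟩ := hG f hf ε hε
      exact ⟨δ, hδ, fun t ht g hg => h t ht g (hC hg)⟩
  have h1 := hmain G subset_rfl
  refine ⟨h1, ?_, ?_⟩
  · intro hGc
    have h2 : @closure X (weakTop (sunDual S)) G = G := by
      rw [← h1]
      exact @IsClosed.closure_eq X (weakTop (circDual X τ)) G hGc
    exact (@closure_eq_iff_isClosed X (weakTop (sunDual S)) G).1 h2
  · apply le_antisymm (induced_mono hle)
    have hcl : ∀ V : Set G,
        @IsClosed _ (TopologicalSpace.induced ((↑) : G → X) (weakTop (circDual X τ))) V →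
        @IsClosed _ (TopologicalSpace.induced ((↑) : G → X) (weakTop (sunDual S))) V := by
      intro V hV
      obtain ⟨C, hCcl, hCV⟩ :=
        (@isClosed_induced_iff _ _ (weakTop (circDual X τ)) V ((↑) : G → X)).1 hV
      set C₀ : Set X := ((↑) : G → X) '' V with hC₀
      have hC₀G : C₀ ⊆ G := by rintro _ ⟨y, -, rfl⟩; exact y.2
      have hC₀C : C₀ ⊆ C := by
        rintro _ ⟨y, hy, rfl⟩
        rw [← hCV] at hy
        exact hy
      have hVeq : V = ((↑) : G → X) ⁻¹' (@closure X (weakTop (circDual X τ)) C₀) := by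
        apply Set.Subset.antisymm
        · intro y hy
          have hm : (y : X) ∈ C₀ := ⟨y, hy, rfl⟩
          have hsub1 : C₀ ⊆ @closure X (weakTop (circDual X τ)) C₀ :=
            @subset_closure X (weakTop (circDual X τ)) C₀
          exact hsub1 hm
        · intro y hy
          have hsub2 : @closure X (weakTop (circDual X τ)) C₀ ⊆ C :=
            @closure_minimal X (weakTop (circDual X τ)) C₀ C hC₀C hCcl
          have hyC : (y : X) ∈ C := hsub2 hy
          rw [← hCV]
          exact hyC
      rw [hVeq, hmain C₀ hC₀G]
      exact (@isClosed_induced_iff _ _ (weakTop (sunDual S)) _ _).2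
        ⟨_, @isClosed_closure X (weakTop (sunDual S)) C₀, rfl⟩
    rw [TopologicalSpace.le_def]
    intro U hU
    have hUc := hcl Uᶜ
      ((@isClosed_compl_iff _ (TopologicalSpace.induced ((↑) : G → X) (weakTop (circDual X τ))) U).2 hU)
    exact (@isClosed_compl_iff _ (TopologicalSpace.induced ((↑) : G → X) (weakTop (sunDual S))) U).1 hUc

end
end

section
/- Under the standard and dual assumptions, let (T(t)) be a τ-bi-continuous semigroup on X with generator A and growth type |ω| with constant M (‖T(t)‖ ≤ Me^{|ω|t}). If H ⊆ X is norm-bounded by C, then for every λ ∈ ρ(A) and every γ-continuous seminorm p one has p(T(t)R(λ,A)h − R(λ,A)h) ≤ t·M·C·e^{|ω|t}·‖AR(λ,A)‖_{L(X)} for all t > 0, h ∈ H; hence R(λ,A)H is γ-(T(t))-equicontinuous at t = 0. -/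
noncomputable section

open Filter Topology MeasureTheory

lemma bOp_map_sub' {X : Type*} [NormedAddCommGroup X] [NormedSpace ℂ X]
    (T : bOp X) (y z : X) : T (y - z) = T y - T z := map_sub T y z

lemma bOp_map_smul_real' {X : Type*} [NormedAddCommGroup X] [NormedSpace ℂ X]
    (T : bOp X) (c : ℝ) (y : X) : T (c • y) = c • T y := T.map_smul_of_tower c y

lemma wDual_map_sub' {X : Type*} [NormedAddCommGroup X] [NormedSpace ℂ X]
    (f : wDual X) (y z : X) : f (y - z) = f y - f z := map_sub f y z

lemma wDual_map_smul_real' {X : Type*} [NormedAddCommGroup X] [NormedSpace ℂ X]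
    (f : wDual X) (c : ℝ) (y : X) : f (c • y) = c • f y := f.map_smul_of_tower c y

lemma wDual_map_zero' {X : Type*} [NormedAddCommGroup X] [NormedSpace ℂ X]
    (f : wDual X) : f 0 = 0 := map_zero f

theorem resolvent_image_gamma_equicontinuous
    {X : Type*} [NormedAddCommGroup X] [NormedSpace ℂ X] [CompleteSpace X]
    (τ : TopologicalSpace X)
    (hstd : StdAssumptions X τ) (hdual : DualAssumptions X τ)
    (S : BiContinuousSemigroup X τ)
    (γ : TopologicalSpace X) (hmix : IsMixedTopology X τ γ)
    (D : Set X) (A : X → X) (hgen : IsBiGenerator S D A)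
    (M ω : ℝ) (hM : 1 ≤ M) (hMω : ∀ t ≥ (0:ℝ), ‖S.T t‖ ≤ M * Real.exp (|ω| * t))
    (l : ℂ) (R : bOp X) (hres : IsResolvent D A l R)
    (H : Set X) (C : ℝ) (hH : ∀ h ∈ H, ‖h‖ ≤ C)
    (p : Seminorm ℝ X) (hpcont : @Continuous X ℝ γ _ ⇑p) (hple : ∀ x : X, p x ≤ ‖x‖) :
    (∀ t > (0:ℝ), ∀ h ∈ H,
      p (S.T t (R h) - R h) ≤ t * M * C * Real.exp (|ω| * t) * ‖l • R - 1‖) ∧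
    ∀ U ∈ @nhds X γ (0:X), ∃ δ > (0:ℝ), ∀ t ∈ Set.Ico (0:ℝ) δ, ∀ h ∈ H,
      S.T t (R h) - R h ∈ U := by
  have habs : (0:ℝ) ≤ |ω| := abs_nonneg ω
  -- the central norm estimate
  have key : ∀ t > (0:ℝ), ∀ h : X,
      ‖S.T t (R h) - R h‖ ≤ t * (M * Real.exp (|ω| * t) * (‖l • R - 1‖ * ‖h‖)) := by
    intro t ht h
    set x : X := R h with hxdef
    have hxD : x ∈ D := (hres.1 h).1
    set a : X := A x with hadef
    have ha_eq : a = (l • R - 1) h := by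
      have h2 : l • R h - A (R h) = h := (hres.1 h).2
      have h3 : A (R h) = l • R h - h := by
        have h4 : l • R h = h + A (R h) := sub_eq_iff_eq_add.mp h2
        rw [h4]; abel
      simp only [hadef, hxdef, ContinuousLinearMap.sub_apply,
        ContinuousLinearMap.smul_apply, ContinuousLinearMap.one_apply, h3]
    have ha_norm : ‖a‖ ≤ ‖l • R - 1‖ * ‖h‖ := by
      rw [ha_eq]; exact (l • R - 1).le_opNorm h
    have hda : Filter.Tendsto (fun u : ℝ => u⁻¹ • (S.T u x - x))
        (nhdsWithin 0 (Set.Ioi 0)) (@nhds X τ a) := hgen.2 x hxD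
    obtain ⟨Cx, hCx⟩ := ((hgen.1 x).1 hxD).2
    have Tsub : ∀ (s : ℝ) (y z : X), S.T s (y - z) = S.T s y - S.T s z :=
      fun s y z => bOp_map_sub' (S.T s) y z
    have Tsmul : ∀ (s : ℝ) (c : ℝ) (y : X), S.T s (c • y) = c • S.T s y :=
      fun s c y => bOp_map_smul_real' (S.T s) c y
    -- per-functional estimate
    have main : ∀ f : wDual X, @Continuous X ℂ τ _ ⇑f → ‖f‖ ≤ 1 →
        ‖f (S.T t x - x)‖ ≤ M * Real.exp (|ω| * t) * ‖a‖ * (t - 0) := by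
      intro f hfc hf1
      set φ : ℝ → ℂ := (⇑f) ∘ (fun s => S.T s x) with hφ
      have hcont : ContinuousOn φ (Set.Icc 0 t) := by
        have h1 : @ContinuousOn ℝ X _ τ (fun s => S.T s x) (Set.Ici 0) := S.strongCont x
        have h2 : @ContinuousOn X ℂ τ _ (⇑f) Set.univ :=
          @Continuous.continuousOn X ℂ τ _ (⇑f) Set.univ hfc
        exact (@ContinuousOn.comp ℝ X ℂ _ τ _ (fun s => S.T s x) (Set.Ici 0) (⇑f)
          Set.univ h2 h1 (Set.mapsTo_univ _ _)).mono Set.Icc_subset_Ici_self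
      have hderiv : ∀ s ∈ Set.Ico 0 t,
          HasDerivWithinAt φ (f (S.T s a)) (Set.Ici s) s := by
        intro s hs
        rw [hasDerivWithinAt_iff_tendsto_slope, Set.Ici_sdiff_left,
          Filter.tendsto_iff_seq_tendsto]
        intro r hr
        have hrs : Tendsto r atTop (𝓝 s) := hr.mono_right nhdsWithin_le_nhds
        have hrmem : ∀ᶠ n in atTop, r n ∈ Set.Ioi s := hr.eventually eventually_mem_nhdsWithin
        set u : ℕ → ℝ := fun n => r n - s with hu
        have humem : ∀ᶠ n in atTop, 0 < u n := hrmem.mono fun n hn => sub_pos.mpr hn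
        have hutend : Tendsto u atTop (𝓝 0) := by
          have := hrs.sub_const s
          simpa using this
        have hu0 : Tendsto u atTop (nhdsWithin 0 (Set.Ioi 0)) :=
          tendsto_nhdsWithin_iff.mpr ⟨hutend, humem⟩
        set v : ℕ → X := fun n => (u n)⁻¹ • (S.T (u n) x - x) with hv
        have hva : Tendsto v atTop (@nhds X τ a) := hda.comp hu0
        have hu1 : ∀ᶠ n in atTop, u n < 1 :=
          Filter.Tendsto.eventually_lt_const one_pos hutend
        have hbound : ∀ᶠ n in atTop, ‖v n‖ ≤ Cx := by
          filter_upwards [humem, hu1] with n h0 hlt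
          have hc := hCx (u n) ⟨h0, hlt.le⟩
          have : ‖v n‖ = (u n)⁻¹ * ‖S.T (u n) x - x‖ := by
            rw [hv]; simp only [norm_smul, Real.norm_eq_abs, abs_inv, abs_of_pos h0]
          rw [this]
          calc (u n)⁻¹ * ‖S.T (u n) x - x‖ ≤ (u n)⁻¹ * (Cx * u n) := by
                exact mul_le_mul_of_nonneg_left hc (inv_nonneg.mpr h0.le)
            _ = Cx := by field_simp
        obtain ⟨N, hN⟩ := Filter.eventually_atTop.mp hbound
        have hvbdd : ∃ Cb, ∀ n, ‖v n‖ ≤ Cb := by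
          refine ⟨|Cx| + ∑ i ∈ Finset.range N, ‖v i‖, fun n => ?_⟩
          by_cases hn : n < N
          · have h1 : ‖v n‖ ≤ ∑ i ∈ Finset.range N, ‖v i‖ :=
              Finset.single_le_sum (fun i _ => norm_nonneg _) (Finset.mem_range.mpr hn)
            have h2 : (0:ℝ) ≤ |Cx| := abs_nonneg _
            linarith
          · have h1 := hN n (not_lt.mp hn)
            have h2 : (0:ℝ) ≤ ∑ i ∈ Finset.range N, ‖v i‖ :=
              Finset.sum_nonneg fun i _ => norm_nonneg _
            have h3 := le_abs_self Cx
            linarith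
        have hTw : Tendsto (fun n => S.T s (v n - a)) atTop (@nhds X τ 0) := by
          rw [Filter.tendsto_def]
          intro U hU
          have := S.biEquicont v a hvbdd hva s hs.1 U hU
          exact this.mono fun n hn => hn s ⟨hs.1, le_rfl⟩
        have fsub : ∀ (y z : X), f (y - z) = f y - f z :=
          fun y z => wDual_map_sub' f y z
        have fsmul : ∀ (c : ℝ) (y : X), f (c • y) = c • f y :=
          fun c y => wDual_map_smul_real' f c y
        have hfTw : Tendsto (fun n => f (S.T s (v n - a))) atTop (𝓝 0) := by
          have h0 : f (0:X) = 0 := wDual_map_zero' f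
          have := (@Continuous.tendsto X ℂ τ _ (⇑f) hfc (0:X)).comp hTw
          simpa [h0, Function.comp_def] using this
        have hfT : Tendsto (fun n => f (S.T s (v n))) atTop (𝓝 (f (S.T s a))) := by
          have h9 : Tendsto (fun n => f (S.T s (v n)) - f (S.T s a)) atTop (𝓝 0) :=
            hfTw.congr fun n => by rw [Tsub, fsub]
          exact tendsto_sub_nhds_zero_iff.mp h9
        refine hfT.congr' ?_
        filter_upwards [humem] with n hn
        have hsum : s + u n = r n := by simp [hu]
        have hTadd : S.T (s + u n) = opComp (S.T s) (S.T (u n)) :=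
          S.map_add s hs.1 (u n) hn.le
        have h1 : S.T s (v n) = (u n)⁻¹ • (S.T (r n) x - S.T s x) := by
          rw [hv]
          simp only
          rw [Tsmul, Tsub]
          congr 2
          rw [← hsum, hTadd]
          rfl
        have h2 : f (S.T s (v n)) = (u n)⁻¹ • (φ (r n) - φ s) := by
          rw [h1, fsmul, fsub]
          rfl
        rw [h2]
        simp only [Function.comp_apply, slope_def_module, hu]
      have hbd : ∀ s ∈ Set.Ico 0 t, ‖f (S.T s a)‖ ≤ M * Real.exp (|ω| * t) * ‖a‖ := by
        intro s hs
        have h1 : ‖f (S.T s a)‖ ≤ ‖f‖ * ‖S.T s a‖ := f.le_opNorm _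
        have h2 : ‖S.T s a‖ ≤ ‖S.T s‖ * ‖a‖ := (S.T s).le_opNorm a
        have h3 : ‖S.T s‖ ≤ M * Real.exp (|ω| * s) := hMω s hs.1
        have h4 : Real.exp (|ω| * s) ≤ Real.exp (|ω| * t) :=
          Real.exp_le_exp.mpr (by nlinarith [hs.2.le])
        have h5 : (0:ℝ) ≤ ‖a‖ := norm_nonneg a
        have h6 : (0:ℝ) ≤ ‖S.T s a‖ := norm_nonneg _
        calc ‖f (S.T s a)‖ ≤ ‖f‖ * ‖S.T s a‖ := h1
          _ ≤ 1 * ‖S.T s a‖ := mul_le_mul_of_nonneg_right hf1 h6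
          _ = ‖S.T s a‖ := one_mul _
          _ ≤ ‖S.T s‖ * ‖a‖ := h2
          _ ≤ (M * Real.exp (|ω| * s)) * ‖a‖ := mul_le_mul_of_nonneg_right h3 h5
          _ ≤ M * Real.exp (|ω| * t) * ‖a‖ :=
              mul_le_mul_of_nonneg_right
                (mul_le_mul_of_nonneg_left h4 (by linarith)) h5
      have := norm_image_sub_le_of_norm_deriv_right_le_segment hcont hderiv hbd t
        (Set.right_mem_Icc.mpr ht.le)
      have hφt : φ t - φ 0 = f (S.T t x - x) := by
        have h0 : S.T 0 x = x := by rw [S.map_zero]; rfl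
        have fsub : ∀ (y z : X), f (y - z) = f y - f z :=
          fun y z => wDual_map_sub' f y z
        simp only [hφ, Function.comp_apply, h0, fsub]
      rwa [hφt] at this
    have hnorm : ‖S.T t x - x‖ ≤ M * Real.exp (|ω| * t) * ‖a‖ * (t - 0) := by
      refine (hstd.norming (S.T t x - x)).2 ?_
      rintro r ⟨f, hfc, hf1, rfl⟩
      exact main f hfc hf1
    calc ‖S.T t x - x‖ ≤ M * Real.exp (|ω| * t) * ‖a‖ * (t - 0) := hnorm
      _ = t * (M * Real.exp (|ω| * t) * ‖a‖) := by ring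
      _ ≤ t * (M * Real.exp (|ω| * t) * (‖l • R - 1‖ * ‖h‖)) := by
          have h1 : (0:ℝ) ≤ t * (M * Real.exp (|ω| * t)) := by positivity
          nlinarith [Real.exp_pos (|ω| * t), ha_norm]
  constructor
  · intro t ht h hh
    have hk := key t ht h
    have hp := hple (S.T t (R h) - R h)
    have hhC := hH h hh
    have hC0 : (0:ℝ) ≤ C := le_trans (norm_nonneg h) hhC
    have hfac : (0:ℝ) ≤ t * M * Real.exp (|ω| * t) * ‖l • R - 1‖ := by positivity
    calc (p (S.T t (R h) - R h) : ℝ) ≤ ‖S.T t (R h) - R h‖ := hp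
      _ ≤ t * (M * Real.exp (|ω| * t) * (‖l • R - 1‖ * ‖h‖)) := hk
      _ = (t * M * Real.exp (|ω| * t) * ‖l • R - 1‖) * ‖h‖ := by ring
      _ ≤ (t * M * Real.exp (|ω| * t) * ‖l • R - 1‖) * C :=
          mul_le_mul_of_nonneg_left hhC hfac
      _ = t * M * C * Real.exp (|ω| * t) * ‖l • R - 1‖ := by ring
  · intro U hU
    have hU' : U ∈ @nhds X UniformSpace.toTopologicalSpace 0 :=
      _root_.nhds_mono hmix.norm_le hU
    obtain ⟨ε, hε, hball⟩ := Metric.mem_nhds_iff.mp hU'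
    set K : ℝ := M * Real.exp (|ω|) * (‖l • R - 1‖ * max C 0) with hK
    have hK0 : (0:ℝ) ≤ K := by positivity
    refine ⟨min 1 (ε / (K + 1)), lt_min one_pos (by positivity), ?_⟩
    intro t htmem h hh
    rcases eq_or_lt_of_le htmem.1 with h0 | h0
    · have : S.T t (R h) - R h = 0 := by
        rw [← h0, S.map_zero]; simp
      rw [this]
      exact hball (by simpa using hε)
    · have ht1 : t ≤ 1 := le_trans htmem.2.le (min_le_left _ _)
      have htK : t < ε / (K + 1) := lt_of_lt_of_le htmem.2 (min_le_right _ _)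
      have hk := key t h0 h
      have hhC : ‖h‖ ≤ max C 0 := le_trans (hH h hh) (le_max_left _ _)
      have hexp : Real.exp (|ω| * t) ≤ Real.exp (|ω|) := by
        apply Real.exp_le_exp.mpr
        nlinarith
      have hle : ‖S.T t (R h) - R h‖ ≤ t * K := by
        refine le_trans hk ?_
        rw [hK]
        have h1 : M * Real.exp (|ω| * t) * (‖l • R - 1‖ * ‖h‖)
            ≤ M * Real.exp (|ω|) * (‖l • R - 1‖ * max C 0) := by
          have hM0 : (0:ℝ) ≤ M := by linarith
          have hn0 : (0:ℝ) ≤ ‖h‖ := norm_nonneg h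
          gcongr
        exact mul_le_mul_of_nonneg_left h1 h0.le
      have hlt : t * K < ε := by
        have h1 : t * (K + 1) < ε := by
          rw [← lt_div_iff₀ (by positivity)]
          exact htK
        nlinarith
      apply hball
      rw [Metric.mem_ball, dist_zero_right]
      exact lt_of_le_of_lt hle hlt


end
end

section
/- Let (X,‖·‖,τ) satisfy the standard assumptions with mixed topology γ, let (T(t)) be a τ-bi-continuous semigroup with generator A, and let Y be a (T(t))-invariant, sequentially γ-closed linear subspace of X. Then the restricted semigroup (T(t)|_Y) is a τ|_Y-bi-continuous semigroup on Y and its generator is the part of A in Y with domain D(A) ∩ Y. -/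
noncomputable section

open Filter Topology MeasureTheory

/-- Restriction of a bounded operator to an invariant submodule. -/
def restrictBOp {X : Type*} [NormedAddCommGroup X] [NormedSpace ℂ X]
    (Y : Submodule ℂ X) (R : bOp X) (h : ∀ y ∈ Y, R y ∈ Y) : bOp Y :=
  ContinuousLinearMap.codRestrict (R.comp Y.subtypeL) Y (fun y => h y y.2)

theorem bOpY_ext {X : Type*} [NormedAddCommGroup X] [NormedSpace ℂ X] (Y : Submodule ℂ X)
    {R R' : bOp Y} (h : ∀ y : Y, ((R y : X)) = (R' y : X)) : R = R' :=
  ContinuousLinearMap.ext fun y => Subtype.ext (h y)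

@[simp] theorem restrictBOp_coe {X : Type*} [NormedAddCommGroup X] [NormedSpace ℂ X]
    (Y : Submodule ℂ X) (R : bOp X) (h : ∀ y ∈ Y, R y ∈ Y) (y : Y) :
    ((restrictBOp Y R h y : X)) = R (y : X) := rfl

/-- Restriction of a bi-continuous semigroup to an invariant, sequentially `γ`-closed
subspace: it is bi-continuous for the restricted topology and its generator is the part of
the generator, with domain `D(A) ∩ Y`. -/
theorem restriction_to_invariant_subspace
    {X : Type*} [NormedAddCommGroup X] [NormedSpace ℂ X] [CompleteSpace X]
    (τ : TopologicalSpace X)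
    (hstd : StdAssumptions X τ)
    (S : BiContinuousSemigroup X τ)
    (D : Set X) (A : X → X) (hgen : IsBiGenerator S D A)
    (Y : Submodule ℂ X)
    (hinvY : ∀ t ≥ (0:ℝ), ∀ y ∈ Y, S.T t y ∈ Y)
    (hclosedY : ∀ (u : ℕ → X) (l : X), (∀ n, u n ∈ Y) → (∃ C, ∀ n, ‖u n‖ ≤ C) →
      Filter.Tendsto u Filter.atTop (@nhds X τ l) → l ∈ Y) :
    ∃ S' : BiContinuousSemigroup Y (TopologicalSpace.induced ((↑) : Y → X) τ),
      (∀ t ≥ (0:ℝ), ∀ y : Y, ((S'.T t y : X)) = S.T t (y : X)) ∧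
      ∀ (D' : Set Y) (A' : Y → Y), IsBiGenerator S' D' A' →
        (∀ y : Y, y ∈ D' ↔ (y : X) ∈ D) ∧ ∀ y ∈ D', ((A' y : X)) = A (y : X) := by
  set τ' := TopologicalSpace.induced ((↑) : Y → X) τ with hτ'
  -- tendsto into induced topology
  have hnhds : ∀ {α : Type} {l : Filter α} (f : α → Y) (y : Y),
      Filter.Tendsto f l (@nhds Y τ' y) ↔
        Filter.Tendsto (fun a => (f a : X)) l (@nhds X τ (y : X)) := by
    intro α l f y
    rw [hτ', nhds_induced, Filter.tendsto_comap_iff]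
    exact Iff.rfl
  have hmem : ∀ (t : ℝ) (y : Y), S.T (max t 0) (y : X) ∈ Y := fun t y =>
    hinvY _ (le_max_right _ _) _ y.2
  let T' : ℝ → _ := fun t =>
    restrictBOp Y (S.T (max t 0)) (fun y hy => hinvY _ (le_max_right _ _) y hy)
  have hTcoe : ∀ (t : ℝ) (y : Y), ((T' t y : X)) = S.T (max t 0) (y : X) := fun _ _ => rfl
  have hTcoe' : ∀ t ≥ (0:ℝ), ∀ y : Y, ((T' t y : X)) = S.T t (y : X) := by
    intro t ht y; rw [hTcoe, max_eq_left ht]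
  obtain ⟨M, hM1, ω, hMb⟩ := S.expBounded
  refine ⟨⟨T', ?_, ?_, ?_, ⟨M, hM1, ω, ?_⟩, ?_⟩, ?_, ?_⟩
  · -- map_zero
    apply bOpY_ext Y
    intro y
    have : ((T' 0 y : X)) = S.T 0 (y : X) := hTcoe' 0 le_rfl y
    rw [S.map_zero] at this
    rw [this]
    rfl
  · -- map_add
    intro s hs t ht
    apply bOpY_ext Y
    intro y
    have h1 : ((T' (s + t) y : X)) = S.T (s + t) (y : X) := hTcoe' _ (by linarith) y
    have h2 : ((T' s (T' t y) : X)) = S.T s ((T' t y : X)) := hTcoe' s hs _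
    rw [S.map_add s hs t ht] at h1
    simp only [ContinuousLinearMap.coe_comp', Function.comp_apply] at h1 ⊢
    rw [h1, h2, hTcoe' t ht y]
  · -- strongCont
    intro y t ht
    have h1 := S.strongCont (y : X) t ht
    show Filter.Tendsto (fun s => T' s y) (nhdsWithin t (Set.Ici 0)) (@nhds Y τ' (T' t y))
    rw [hnhds]
    have heq : ∀ s ∈ Set.Ici (0:ℝ), ((T' s y : X)) = S.T s (y : X) := fun s hs =>
      hTcoe' s hs y
    have h1' : Filter.Tendsto (fun s => S.T s (y : X)) (nhdsWithin t (Set.Ici 0))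
        (@nhds X τ (S.T t (y : X))) := h1
    rw [hTcoe' t ht y]
    exact h1'.congr' (Filter.eventuallyEq_of_mem self_mem_nhdsWithin
      (fun s hs => (heq s hs).symm))
  · -- expBounded
    intro t ht
    apply ContinuousLinearMap.opNorm_le_bound
    · positivity
    · intro y
      have : ‖T' t y‖ = ‖S.T t (y : X)‖ := by rw [← hTcoe' t ht y]; rfl
      rw [this]
      calc ‖S.T t (y : X)‖ ≤ ‖S.T t‖ * ‖(y : X)‖ := (S.T t).le_opNorm _
        _ ≤ M * Real.exp (ω * t) * ‖(y : X)‖ :=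
            mul_le_mul_of_nonneg_right (hMb t ht) (norm_nonneg _)
        _ = M * Real.exp (ω * t) * ‖y‖ := rfl
  · -- biEquicont
    intro u y hb htend b hb0 U hU
    rw [hτ', nhds_induced] at hU
    obtain ⟨V, hV, hVU⟩ := hU
    have h0 : ((0 : Y) : X) = 0 := rfl
    rw [h0] at hV
    have htend' : Filter.Tendsto (fun n => ((u n : X))) atTop (@nhds X τ ((y : X))) :=
      (hnhds u y).mp htend
    have hb' : ∃ C, ∀ n, ‖(u n : X)‖ ≤ C := hb
    have := S.biEquicont (fun n => (u n : X)) (y : X) hb' htend' b hb0 V hV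
    filter_upwards [this] with n hn t htb
    apply hVU
    show S.T (max t 0) ((u n - y : Y) : X) ∈ V
    rw [max_eq_left htb.1]
    exact hn t htb
  · -- coe identity
    exact hTcoe'
  · -- generator part
    intro D' A' hgen'
    -- difference quotient coercion on Ioi 0
    have hq : ∀ (y : Y) (t : ℝ), t ∈ Set.Ioi (0:ℝ) →
        ((t⁻¹ • (T' t y - y) : Y) : X) = t⁻¹ • (S.T t (y : X) - (y : X)) := by
      intro y t ht
      show t⁻¹ • (((T' t y : X)) - (y : X)) = _
      rw [hTcoe' t (le_of_lt ht) y]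
    -- tendsto equivalence for difference quotients
    have hqt : ∀ (y : Y) (z : Y),
        Filter.Tendsto (fun t : ℝ => t⁻¹ • (T' t y - y)) (nhdsWithin 0 (Set.Ioi 0))
          (@nhds Y τ' z) ↔
        Filter.Tendsto (fun t : ℝ => t⁻¹ • (S.T t (y : X) - (y : X)))
          (nhdsWithin 0 (Set.Ioi 0)) (@nhds X τ (z : X)) := by
      intro y z
      rw [hnhds]
      exact Filter.tendsto_congr' (Filter.eventuallyEq_of_mem self_mem_nhdsWithin (hq y))
    -- norm of difference quotient pieces
    have hqn : ∀ (y : Y) (t : ℝ), t ≥ 0 → ‖T' t y - y‖ = ‖S.T t (y : X) - (y : X)‖ := by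
      intro y t ht
      show ‖((T' t y : X)) - (y : X)‖ = _
      rw [hTcoe' t ht y]
    -- membership iff
    have hmemD : ∀ y : Y, y ∈ D' ↔ (y : X) ∈ D := by
      intro y
      rw [(hgen'.1 y), (hgen.1 (y : X))]
      constructor
      · rintro ⟨⟨z, hz⟩, C, hC⟩
        refine ⟨⟨(z : X), (hqt y z).mp hz⟩, C, ?_⟩
        intro t ht
        rw [← hqn y t (le_of_lt ht.1)]
        exact hC t ht
      · rintro ⟨⟨z, hz⟩, C, hC⟩
        -- show z ∈ Y by sequential closedness
        set tn : ℕ → ℝ := fun n => ((n : ℝ) + 1)⁻¹ with htn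
        have htn_pos : ∀ n, 0 < tn n := by
          intro n; positivity
        have htn_le : ∀ n, tn n ≤ 1 := by
          intro n
          rw [htn]
          rw [inv_le_one_iff₀]
          right; push_cast; linarith [Nat.cast_nonneg (α := ℝ) n]
        have htn_tend : Filter.Tendsto tn atTop (nhdsWithin 0 (Set.Ioi 0)) := by
          rw [tendsto_nhdsWithin_iff]
          constructor
          · have := tendsto_one_div_add_atTop_nhds_zero_nat (𝕜 := ℝ)
            simpa [htn, one_div] using this
          · exact Filter.Eventually.of_forall fun n => htn_pos n
        set u : ℕ → X := fun n => (tn n)⁻¹ • (S.T (tn n) (y : X) - (y : X)) with hu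
        have humem : ∀ n, u n ∈ Y := by
          intro n
          refine Submodule.smul_of_tower_mem Y _ (Submodule.sub_mem Y ?_ y.2)
          exact hinvY (tn n) (le_of_lt (htn_pos n)) _ y.2
        have hubd : ∃ C', ∀ n, ‖u n‖ ≤ C' := by
          refine ⟨C, fun n => ?_⟩
          rw [hu]
          simp only
          rw [norm_smul, norm_inv, Real.norm_eq_abs, abs_of_pos (htn_pos n)]
          calc (tn n)⁻¹ * ‖S.T (tn n) (y : X) - (y : X)‖
              ≤ (tn n)⁻¹ * (C * tn n) :=
                mul_le_mul_of_nonneg_left (hC (tn n) ⟨htn_pos n, htn_le n⟩)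
                  (inv_pos.mpr (htn_pos n)).le
            _ = C := by field_simp [(htn_pos n).ne']
        have hutend : Filter.Tendsto u atTop (@nhds X τ z) := hz.comp htn_tend
        have hzY : z ∈ Y := hclosedY u z humem hubd hutend
        refine ⟨⟨⟨z, hzY⟩, (hqt y ⟨z, hzY⟩).mpr hz⟩, C, ?_⟩
        intro t ht
        rw [hqn y t (le_of_lt ht.1)]
        exact hC t ht
    refine ⟨hmemD, ?_⟩
    intro y hy
    have h1 := hgen'.2 y hy
    have h2 := hgen.2 (y : X) ((hmemD y).mp hy)
    have h1' := (hqt y (A' y)).mp h1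
    have ht2 : @T2Space X τ := hstd.t2
    exact @tendsto_nhds_unique' X ℝ τ ht2 _ _ _ _ (nhdsGT_neBot 0) h1' h2


end
end
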